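/- arXiv:1210.7524 — 5 statements merged into one kernel-verified Lean document; each statement's English description precedes it below -/
import Mathlib

section
/- If Φ : Mₙ(ℂ) → Mₗ(ℂ) is a strictly positive linear map (i.e., it maps positive definite matrices to positive definite matrices) and 0 ≤ p ≤ 1, then the map A ↦ Φ(A^{-p})^{-1} on positive definite matrices is operator concave, i.e., Φ(((A+B)/2)^{-p})^{-1} ≥ (Φ(A^{-p})^{-1} + Φ(B^{-p})^{-1})/2 in the Loewner order for all positive definite A, B. -/
open Matrix
open scoped ComplexOrder

/-- Real power of a Hermitian matrix via the spectral theorem (junk value `0` on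
non-Hermitian input). -/
noncomputable def mpow {n : Type*} [Fintype n] [DecidableEq n] (A : Matrix n n ℂ) (p : ℝ) :
    Matrix n n ℂ :=
  if hA : A.IsHermitian then
    (hA.eigenvectorUnitary : Matrix n n ℂ) *
      Matrix.diagonal (fun i => ((hA.eigenvalues i ^ p : ℝ) : ℂ)) *
      star (hA.eigenvectorUnitary : Matrix n n ℂ)
  else 0

/-- Loewner order: `loewner A B` iff `B - A` is positive semidefinite. -/
def loewner {n : Type*} [Fintype n] (A B : Matrix n n ℂ) : Prop := (B - A).PosSemidef

/-- Smallest eigenvalue of a Hermitian matrix (junk value `0` on non-Hermitian input). -/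
noncomputable def lambdaMin {n : Type*} [Fintype n] [DecidableEq n] (A : Matrix n n ℂ) : ℝ :=
  if hA : A.IsHermitian then ⨅ i, hA.eigenvalues i else 0

/-- Largest eigenvalue of a Hermitian matrix; for positive definite `A` this is the
operator norm `‖A‖∞` (junk value `0` on non-Hermitian input). -/
noncomputable def lambdaMax {n : Type*} [Fintype n] [DecidableEq n] (A : Matrix n n ℂ) : ℝ :=
  if hA : A.IsHermitian then ⨆ i, hA.eigenvalues i else 0

/-- The `j`-th smallest eigenvalue (counted with multiplicity, increasing order)
of a Hermitian matrix. -/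
noncomputable def eigUp {k : ℕ} (A : Matrix (Fin k) (Fin k) ℂ) (j : Fin k) : ℝ :=
  if hA : A.IsHermitian then (hA.eigenvalues ∘ Tuple.sort hA.eigenvalues) j else 0

/-- The `j`-th largest eigenvalue of a Hermitian matrix. -/
noncomputable def eigDown {k : ℕ} (A : Matrix (Fin k) (Fin k) ℂ) (j : Fin k) : ℝ :=
  eigUp A j.rev

section SFun
variable {n : Type*} [Fintype n] [DecidableEq n] {A : Matrix n n ℂ}

noncomputable def sfun (hA : A.IsHermitian) (f : ℝ → ℝ) : Matrix n n ℂ :=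
  (hA.eigenvectorUnitary : Matrix n n ℂ) *
    Matrix.diagonal (fun i => ((f (hA.eigenvalues i) : ℝ) : ℂ)) *
    star (hA.eigenvectorUnitary : Matrix n n ℂ)

lemma mpow_eq_sfun (hA : A.IsHermitian) (p : ℝ) : mpow A p = sfun hA (fun t => t ^ p) := by
  rw [mpow, dif_pos hA]; rfl

lemma sfun_mul (hA : A.IsHermitian) (f g : ℝ → ℝ) :
    sfun hA f * sfun hA g = sfun hA (fun t => f t * g t) := by
  have h1 : (star (hA.eigenvectorUnitary : Matrix n n ℂ)) * (hA.eigenvectorUnitary : Matrix n n ℂ) = 1 :=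
    (Matrix.mem_unitaryGroup_iff').mp hA.eigenvectorUnitary.2
  simp only [sfun, Matrix.mul_assoc]
  rw [← Matrix.mul_assoc (star (hA.eigenvectorUnitary : Matrix n n ℂ)), h1, Matrix.one_mul,
    ← Matrix.mul_assoc (Matrix.diagonal _), Matrix.diagonal_mul_diagonal]
  push_cast
  ring_nf

lemma sfun_add (hA : A.IsHermitian) (f g : ℝ → ℝ) :
    sfun hA f + sfun hA g = sfun hA (fun t => f t + g t) := by
  simp only [sfun, ← Matrix.add_mul, ← Matrix.mul_add, ← Matrix.diagonal_add]
  congr 1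
  congr 1
  ext i j
  simp [Matrix.diagonal]
  split <;> push_cast <;> ring

lemma sfun_sub (hA : A.IsHermitian) (f g : ℝ → ℝ) :
    sfun hA f - sfun hA g = sfun hA (fun t => f t - g t) := by
  simp only [sfun, ← Matrix.sub_mul, ← Matrix.mul_sub, ← Matrix.diagonal_sub]
  congr 1
  congr 1
  ext i j
  simp [Matrix.diagonal]
  split <;> push_cast <;> ring

lemma sfun_one (hA : A.IsHermitian) : sfun hA (fun _ => 1) = 1 := by
  have h1 : (hA.eigenvectorUnitary : Matrix n n ℂ) * (star (hA.eigenvectorUnitary : Matrix n n ℂ)) = 1 :=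
    (Matrix.mem_unitaryGroup_iff).mp hA.eigenvectorUnitary.2
  simp only [sfun]
  norm_num [Matrix.diagonal_one, h1]

lemma sfun_id (hA : A.IsHermitian) : sfun hA (fun t => t) = A := by
  simpa [sfun, Function.comp_def] using hA.spectral_theorem.symm

lemma sfun_isHermitian (hA : A.IsHermitian) (f : ℝ → ℝ) : (sfun hA f).IsHermitian := by
  show _ᴴ = _
  simp only [sfun, Matrix.star_eq_conjTranspose, Matrix.conjTranspose_mul,
    Matrix.conjTranspose_conjTranspose, Matrix.diagonal_conjTranspose, Matrix.mul_assoc]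
  congr 2
  ext i j
  simp [Matrix.diagonal, Pi.star_apply, Complex.conj_ofReal]

lemma sfun_posSemidef (hA : A.IsHermitian) {f : ℝ → ℝ}
    (hf : ∀ i, 0 ≤ f (hA.eigenvalues i)) : (sfun hA f).PosSemidef := by
  have hd : (Matrix.diagonal (fun i => ((f (hA.eigenvalues i) : ℝ) : ℂ))).PosSemidef := by
    refine Matrix.PosSemidef.diagonal fun i => ?_
    show (0:ℂ) ≤ _
    exact Complex.zero_le_real.mpr (hf i)
  have := hd.mul_mul_conjTranspose_same (hA.eigenvectorUnitary : Matrix n n ℂ)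
  simpa [sfun, Matrix.mul_assoc, Matrix.star_eq_conjTranspose] using this

end SFun
section S2
variable {n : Type*} [Fintype n] [DecidableEq n] {A : Matrix n n ℂ}

lemma sfun_congr (hA : A.IsHermitian) {f g : ℝ → ℝ}
    (h : ∀ i, f (hA.eigenvalues i) = g (hA.eigenvalues i)) : sfun hA f = sfun hA g := by
  unfold sfun
  congr 2
  ext i j
  simp [Matrix.diagonal, h i]

lemma eigvec_dotProduct_self (hA : A.IsHermitian) (i : n) :
    dotProduct (star ⇑(hA.eigenvectorBasis i)) ⇑(hA.eigenvectorBasis i) = 1 := by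
  have h1 : ‖hA.eigenvectorBasis i‖ = 1 := hA.eigenvectorBasis.orthonormal.1 i
  have h2 := inner_self_eq_norm_sq_to_K (𝕜 := ℂ) (hA.eigenvectorBasis i)
  rw [EuclideanSpace.inner_eq_star_dotProduct] at h2
  rw [h1] at h2
  rw [dotProduct_comm]
  simpa using h2

lemma eigvec_ne_zero (hA : A.IsHermitian) (i : n) : ⇑(hA.eigenvectorBasis i) ≠ 0 := by
  intro h
  have h1 : ‖hA.eigenvectorBasis i‖ = 1 := hA.eigenvectorBasis.orthonormal.1 i
  have : hA.eigenvectorBasis i = 0 := by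
    apply PiLp.ext; intro j; exact congrFun h j
  rw [this, norm_zero] at h1
  norm_num at h1

lemma quad_one_sub (hA : A.IsHermitian) (i : n) :
    Complex.re (dotProduct (star ⇑(hA.eigenvectorBasis i))
      ((1 - A) *ᵥ ⇑(hA.eigenvectorBasis i))) = 1 - hA.eigenvalues i := by
  rw [Matrix.sub_mulVec, dotProduct_sub, Matrix.one_mulVec, Complex.sub_re,
    eigvec_dotProduct_self hA i]
  have := hA.eigenvalues_eq i
  rw [RCLike.re_to_complex] at this
  rw [Complex.one_re, ← this]

lemma eig_le_one (hA : A.IsHermitian) (h : (1 - A).PosSemidef) (i : n) :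
    hA.eigenvalues i ≤ 1 := by
  have h0 := h.re_dotProduct_nonneg ⇑(hA.eigenvectorBasis i)
  rw [RCLike.re_to_complex] at h0
  have h2 := quad_one_sub hA i
  linarith [h2 ▸ h0]

lemma eig_lt_one (hA : A.IsHermitian) (h : (1 - A).PosDef) (i : n) :
    hA.eigenvalues i < 1 := by
  have h0 := h.re_dotProduct_pos (eigvec_ne_zero hA i)
  rw [RCLike.re_to_complex] at h0
  have h2 := quad_one_sub hA i
  linarith [h2 ▸ h0]

/-- Quadratic form of `sfun` as an explicit real sum. -/
lemma quad_sfun (hA : A.IsHermitian) (f : ℝ → ℝ) (x : n → ℂ) :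
    dotProduct (star x) (sfun hA f *ᵥ x) =
      ((∑ k, f (hA.eigenvalues k) *
        Complex.normSq ((star (hA.eigenvectorUnitary : Matrix n n ℂ) *ᵥ x) k) : ℝ) : ℂ) := by
  set U : Matrix n n ℂ := (hA.eigenvectorUnitary : Matrix n n ℂ) with hU
  set y : n → ℂ := star U *ᵥ x with hy
  have hsy : star x ᵥ* U = star y := by
    rw [hy, Matrix.star_mulVec, Matrix.star_eq_conjTranspose, Matrix.conjTranspose_conjTranspose]
  have : sfun hA f *ᵥ x = U *ᵥ ((Matrix.diagonal fun i => ((f (hA.eigenvalues i) : ℝ) : ℂ)) *ᵥ y) := by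
    simp [sfun, hy, ← Matrix.mulVec_mulVec]
    rfl
  rw [this, Matrix.dotProduct_mulVec, hsy]
  simp only [dotProduct, Matrix.mulVec_diagonal, Pi.star_apply]
  push_cast
  refine Finset.sum_congr rfl fun k _ => ?_
  calc star (y k) * ((f (hA.eigenvalues k) : ℂ) * y k)
      = (f (hA.eigenvalues k) : ℂ) * (star (y k) * y k) := by ring
    _ = (f (hA.eigenvalues k) : ℂ) * (Complex.normSq (y k) : ℂ) := by
        rw [Complex.star_def, ← Complex.normSq_eq_conj_mul_self]
end S2
section S3
variable {n : Type*} [Fintype n] [DecidableEq n] {A : Matrix n n ℂ}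

lemma starU_mulVec_ne_zero (hA : A.IsHermitian) {x : n → ℂ} (hx : x ≠ 0) :
    star (hA.eigenvectorUnitary : Matrix n n ℂ) *ᵥ x ≠ 0 := by
  intro h
  apply hx
  have h1 : (hA.eigenvectorUnitary : Matrix n n ℂ) * (star (hA.eigenvectorUnitary : Matrix n n ℂ)) = 1 :=
    (Matrix.mem_unitaryGroup_iff).mp hA.eigenvectorUnitary.2
  have := congrArg (fun v => (hA.eigenvectorUnitary : Matrix n n ℂ) *ᵥ v) h
  simpa [Matrix.mulVec_mulVec, h1] using this

lemma sfun_posDef (hA : A.IsHermitian) {f : ℝ → ℝ}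
    (hf : ∀ i, 0 < f (hA.eigenvalues i)) : (sfun hA f).PosDef := by
  refine Matrix.PosDef.of_dotProduct_mulVec_pos (sfun_isHermitian hA f) fun x hx => ?_
  rw [quad_sfun]
  rw [Complex.lt_def]
  constructor
  · simp only [Complex.zero_re, Complex.ofReal_re]
    have hy := starU_mulVec_ne_zero hA hx
    obtain ⟨k0, hk0⟩ : ∃ k, (star (hA.eigenvectorUnitary : Matrix n n ℂ) *ᵥ x) k ≠ 0 := by
      by_contra hc
      push_neg at hc
      exact hy (funext hc)
    refine Finset.sum_pos' (fun k _ => ?_) ⟨k0, Finset.mem_univ k0, ?_⟩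
    · exact mul_nonneg (hf k).le (Complex.normSq_nonneg _)
    · exact mul_pos (hf k0) ((Complex.normSq_pos).mpr hk0)
  · simp

/-- `mpow` of a positive definite matrix is positive definite. -/
lemma mpow_posDef (hA : A.PosDef) (p : ℝ) : (mpow A p).PosDef := by
  rw [mpow_eq_sfun hA.1]
  exact sfun_posDef hA.1 fun i => Real.rpow_pos_of_pos (hA.eigenvalues_pos i) p

lemma mpow_isHermitian (hA : A.IsHermitian) (p : ℝ) : (mpow A p).IsHermitian := by
  rw [mpow_eq_sfun hA]; exact sfun_isHermitian hA _

lemma mpow_mul_mpow (hA : A.PosDef) (p q : ℝ) :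
    mpow A p * mpow A q = mpow A (p + q) := by
  simp only [mpow_eq_sfun hA.1, sfun_mul]
  exact sfun_congr hA.1 fun i => (Real.rpow_add (hA.eigenvalues_pos i) p q).symm

lemma mpow_zero (hA : A.IsHermitian) : mpow A 0 = 1 := by
  rw [mpow_eq_sfun hA]
  rw [show (fun t : ℝ => t ^ (0:ℝ)) = fun _ : ℝ => (1:ℝ) from funext fun t => Real.rpow_zero t]
  exact sfun_one hA

lemma mpow_one (hA : A.IsHermitian) : mpow A 1 = A := by
  rw [mpow_eq_sfun hA]
  rw [show (fun t : ℝ => t ^ (1:ℝ)) = fun t : ℝ => t from funext fun t => Real.rpow_one t]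
  exact sfun_id hA

lemma mpow_inv (hA : A.PosDef) (p : ℝ) : (mpow A p)⁻¹ = mpow A (-p) := by
  apply Matrix.inv_eq_right_inv
  rw [mpow_mul_mpow hA, add_neg_cancel, mpow_zero hA.1]

lemma mpow_neg_one (hA : A.PosDef) : mpow A (-1) = A⁻¹ := by
  rw [← mpow_inv hA 1, mpow_one hA.1]

lemma mpow_sq (hA : A.PosDef) (p : ℝ) : mpow A p * mpow A p = mpow A (2 * p) := by
  rw [mpow_mul_mpow hA]; ring_nf

-- Loewner order basics
variable {B C D : Matrix n n ℂ}

lemma loewner_refl (A : Matrix n n ℂ) : loewner A A := by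
  unfold loewner; simpa using Matrix.PosSemidef.zero

lemma loewner_trans (h1 : loewner A B) (h2 : loewner B C) : loewner A C := by
  have := h1.add h2
  unfold loewner
  convert this using 1
  abel

lemma loewner_add (h1 : loewner A B) (h2 : loewner C D) : loewner (A + C) (B + D) := by
  have := h1.add h2
  unfold loewner
  convert this using 1
  abel

lemma realsmul (r : ℝ) (M : Matrix n n ℂ) : r • M = (r : ℂ) • M := by
  ext i j
  simp [Matrix.smul_apply, Complex.real_smul]

lemma posSemidef_rsmul {M : Matrix n n ℂ} (hM : M.PosSemidef) {r : ℝ} (hr : 0 ≤ r) :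
    ((r : ℂ) • M).PosSemidef := by
  refine Matrix.PosSemidef.of_dotProduct_mulVec_nonneg ?_ ?_
  · unfold Matrix.IsHermitian
    rw [Matrix.conjTranspose_smul, hM.1]
    congr 1
    simp [Complex.conj_ofReal]
  · intro x
    rw [Matrix.smul_mulVec, dotProduct_smul]
    exact mul_nonneg (Complex.zero_le_real.mpr hr) (hM.dotProduct_mulVec_nonneg x)

lemma loewner_rsmul (h : loewner A B) {r : ℝ} (hr : 0 ≤ r) :
    loewner (r • A) (r • B) := by
  unfold loewner
  rw [realsmul, realsmul, ← smul_sub]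
  exact posSemidef_rsmul h hr

lemma loewner_conj (h : loewner A B) (M : Matrix n n ℂ) :
    loewner (Mᴴ * A * M) (Mᴴ * B * M) := by
  unfold loewner
  have := h.conjTranspose_mul_mul_same M
  convert this using 1
  noncomm_ring

end S3
section S4
variable {n : Type*} [Fintype n] [DecidableEq n] {A B S T H M X : Matrix n n ℂ}

lemma complex_nonneg_re {z : ℂ} (h : 0 ≤ z) : 0 ≤ z.re ∧ z.im = 0 := by
  rw [Complex.le_def] at h
  exact ⟨by simpa using h.1, by simpa using h.2.symm⟩

lemma quad_real (hN : M.IsHermitian) (x : n → ℂ) :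
    star (dotProduct (star x) (M *ᵥ x)) = dotProduct (star x) (M *ᵥ x) := by
  rw [← Matrix.star_dotProduct_star, star_star, Matrix.star_mulVec, Matrix.dotProduct_mulVec,
    hN]

/-- Monotonicity of the square root: if `S, T ⪰ 0` and `S² ≤ T²` then `S ≤ T`. -/
lemma sq_le_sq_psd (hS : S.PosSemidef) (hT : T.PosSemidef)
    (h : loewner (S * S) (T * T)) : loewner S T := by
  have hM : (T - S).IsHermitian := hT.1.sub hS.1
  refine hM.posSemidef_iff_eigenvalues_nonneg.mpr fun i => show (0:ℝ) ≤ hM.eigenvalues i from ?_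
  by_contra hneg
  push_neg at hneg
  set δ := hM.eigenvalues i with hδ
  set v : n → ℂ := ⇑(hM.eigenvectorBasis i) with hv
  have hev : (T - S) *ᵥ v = (δ : ℂ) • v := by
    have := hM.mulVec_eigenvectorBasis i
    rw [← hv] at this
    rw [this]
    ext j
    simp [Complex.real_smul, hδ]
  have hvMstar : star v ᵥ* (T - S) = (δ : ℂ) • star v := by
    have h1 : star ((T - S) *ᵥ v) = star v ᵥ* (T - S)ᴴ := Matrix.star_mulVec _ _
    rw [hM] at h1
    rw [← h1, hev]
    ext j
    simp [Complex.conj_ofReal]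
  have hkey : dotProduct (star v) ((T * T - S * S) *ᵥ v) =
      (δ : ℂ) * (dotProduct (star v) ((T + S) *ᵥ v)) := by
    have hid : T * T - S * S = T * (T - S) + (T - S) * S := by noncomm_ring
    rw [hid, Matrix.add_mulVec, dotProduct_add]
    have e1 : dotProduct (star v) ((T * (T - S)) *ᵥ v) =
        (δ : ℂ) * dotProduct (star v) (T *ᵥ v) := by
      rw [← Matrix.mulVec_mulVec, hev, Matrix.mulVec_smul, dotProduct_smul]
      simp
    have e2 : dotProduct (star v) (((T - S) * S) *ᵥ v) =
        (δ : ℂ) * dotProduct (star v) (S *ᵥ v) := by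
      rw [Matrix.dotProduct_mulVec, ← Matrix.vecMul_vecMul, hvMstar,
        Matrix.smul_vecMul, smul_dotProduct, ← Matrix.dotProduct_mulVec]
      simp
    rw [e1, e2, Matrix.add_mulVec, dotProduct_add]
    ring
  have h0 : 0 ≤ dotProduct (star v) ((T * T - S * S) *ᵥ v) := h.dotProduct_mulVec_nonneg v
  have hqT := hT.dotProduct_mulVec_nonneg v
  have hqS := hS.dotProduct_mulVec_nonneg v
  obtain ⟨haT, hiT⟩ := complex_nonneg_re hqT
  obtain ⟨haS, hiS⟩ := complex_nonneg_re hqS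
  rw [hkey] at h0
  obtain ⟨hre, _⟩ := complex_nonneg_re h0
  rw [Matrix.add_mulVec, dotProduct_add] at hre
  simp only [Complex.mul_re, Complex.ofReal_re, Complex.ofReal_im, Complex.add_re,
    Complex.add_im, hiT, hiS] at hre
  have hTz : dotProduct (star v) (T *ᵥ v) = 0 := by
    have : (dotProduct (star v) (T *ᵥ v)).re = 0 := by nlinarith
    exact Complex.ext this hiT
  have hSz : dotProduct (star v) (S *ᵥ v) = 0 := by
    have : (dotProduct (star v) (S *ᵥ v)).re = 0 := by nlinarith
    exact Complex.ext this hiS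
  have hT0 : T *ᵥ v = 0 := (hT.dotProduct_mulVec_zero_iff v).mp hTz
  have hS0 : S *ᵥ v = 0 := (hS.dotProduct_mulVec_zero_iff v).mp hSz
  have : (δ : ℂ) • v = 0 := by rw [← hev, Matrix.sub_mulVec, hT0, hS0, sub_zero]
  rcases smul_eq_zero.mp this with hδ0 | hv0
  · rw [Complex.ofReal_eq_zero] at hδ0; exact absurd hδ0 (by linarith)
  · exact eigvec_ne_zero hM i hv0

lemma posDef_conj_pd (hA : A.PosDef) (hH : H.PosDef) : (H * A * H).PosDef := by
  have hHh := hH.1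
  have hdet : IsUnit H.det := isUnit_iff_ne_zero.mpr (ne_of_gt hH.det_pos)
  refine Matrix.PosDef.of_dotProduct_mulVec_pos ?_ ?_
  · have : (H * A * H)ᴴ = H * A * H := by
      rw [Matrix.conjTranspose_mul, Matrix.conjTranspose_mul, hA.1, hHh, Matrix.mul_assoc]
    exact this
  · intro x hx
    have hHx : H *ᵥ x ≠ 0 := by
      intro hz
      apply hx
      have := congrArg (fun v => H⁻¹ *ᵥ v) hz
      simpa [Matrix.mulVec_mulVec, Matrix.nonsing_inv_mul H hdet] using this
    have : dotProduct (star x) ((H * A * H) *ᵥ x) =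
        dotProduct (star (H *ᵥ x)) (A *ᵥ (H *ᵥ x)) := by
      rw [Matrix.mul_assoc, ← Matrix.mulVec_mulVec, Matrix.dotProduct_mulVec,
        ← Matrix.mulVec_mulVec]
      congr 1
      rw [Matrix.star_mulVec, hHh]
    rw [this]
    exact hA.dotProduct_mulVec_pos hHx

lemma loewner_one_of_inv (hX : X.PosDef) (h : loewner X 1) : loewner 1 X⁻¹ := by
  unfold loewner at h ⊢
  have heig := fun i => eig_le_one hX.1 h i
  have hpos := fun i => hX.eigenvalues_pos i
  have hinv : X⁻¹ = sfun hX.1 fun t => t ^ (-1 : ℝ) := by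
    rw [← mpow_eq_sfun hX.1, mpow_neg_one hX]
  have hone : (1 : Matrix n n ℂ) = sfun hX.1 fun _ => 1 := (sfun_one hX.1).symm
  rw [hinv, hone, sfun_sub]
  apply sfun_posSemidef
  intro i
  rw [Real.rpow_neg_one]
  have h1 : hX.1.eigenvalues i * (hX.1.eigenvalues i)⁻¹ = 1 :=
    mul_inv_cancel₀ (ne_of_gt (hpos i))
  have h2 := hpos i
  have h3 := heig i
  nlinarith [inv_pos.mpr (hpos i)]

/-- Inverse is antitone on positive definite matrices. -/
lemma inv_antitone (hA : A.PosDef) (hB : B.PosDef) (h : loewner A B) :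
    loewner B⁻¹ A⁻¹ := by
  set H := mpow B (-(1/2) : ℝ) with hHdef
  have hH : H.PosDef := mpow_posDef hB _
  have hHh : H.IsHermitian := hH.1
  set G := mpow B ((1/2) : ℝ) with hGdef
  have hHG : H * G = 1 := by
    rw [hHdef, hGdef, mpow_mul_mpow hB]
    norm_num
    exact mpow_zero hB.1
  have hGH : G * H = 1 := by
    rw [hHdef, hGdef, mpow_mul_mpow hB]
    norm_num
    exact mpow_zero hB.1
  have hHBH : H * B * H = 1 := by
    nth_rewrite 1 [show B = mpow B 1 from (mpow_one hB.1).symm]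
    rw [hHdef, mpow_mul_mpow hB, mpow_mul_mpow hB]
    norm_num
    exact mpow_zero hB.1
  have hX : (H * A * H).PosDef := posDef_conj_pd hA hH
  have hle : loewner (H * A * H) 1 := by
    have := loewner_conj h H
    rw [hHh] at this
    rwa [hHBH] at this
  have hinv1 : loewner 1 (H * A * H)⁻¹ := loewner_one_of_inv hX hle
  have hXinv : (H * A * H)⁻¹ = G * A⁻¹ * G := by
    rw [Matrix.mul_inv_rev, Matrix.mul_inv_rev]
    have : H⁻¹ = G := Matrix.inv_eq_right_inv hHG
    rw [this, Matrix.mul_assoc]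
  rw [hXinv] at hinv1
  have hconj := loewner_conj hinv1 H
  rw [hHh] at hconj
  have e1 : H * 1 * H = B⁻¹ := by
    rw [Matrix.mul_one, hHdef, mpow_mul_mpow hB]
    norm_num
    exact mpow_neg_one hB
  have e2 : H * (G * A⁻¹ * G) * H = A⁻¹ := by
    rw [Matrix.mul_assoc, Matrix.mul_assoc, hGH, Matrix.mul_one, ← Matrix.mul_assoc, hHG,
      Matrix.one_mul]
  rwa [e1, e2] at hconj

end S4
section S5
variable {n : Type*} [Fintype n] [DecidableEq n] {A B Z : Matrix n n ℂ}

lemma posSemidef_fromBlocks_diag {D : Matrix n n ℂ} (hA : A.PosSemidef) (hD : D.PosSemidef) :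
    (Matrix.fromBlocks A 0 0 D).PosSemidef := by
  refine Matrix.PosSemidef.of_dotProduct_mulVec_nonneg ?_ ?_
  · unfold Matrix.IsHermitian
    rw [Matrix.fromBlocks_conjTranspose]
    simp only [Matrix.conjTranspose_zero]
    rw [hA.1, hD.1]
  · intro x
    rw [Matrix.fromBlocks_mulVec, Matrix.dotProduct_block]
    simp only [Matrix.zero_mulVec, add_zero, zero_add]
    have h1 := hA.dotProduct_mulVec_nonneg (x ∘ Sum.inl)
    have h2 := hD.dotProduct_mulVec_nonneg (x ∘ Sum.inr)
    have e1 : star x ∘ Sum.inl = star (x ∘ Sum.inl) := rfl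
    have e2 : star x ∘ Sum.inr = star (x ∘ Sum.inr) := rfl
    rw [e1, e2]
    exact add_nonneg h1 h2

open scoped MatrixOrder in
noncomputable def Matrix.PosSemidef.sqrt {M : Matrix n n ℂ} (_ : M.PosSemidef) : Matrix n n ℂ :=
  CFC.sqrt M

open scoped MatrixOrder in
lemma Matrix.PosSemidef.posSemidef_sqrt {M : Matrix n n ℂ} (hM : M.PosSemidef) :
    hM.sqrt.PosSemidef :=
  Matrix.nonneg_iff_posSemidef.mp (CFC.sqrt_nonneg M)

open scoped MatrixOrder in
lemma Matrix.PosSemidef.sqrt_mul_self {M : Matrix n n ℂ} (hM : M.PosSemidef) :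
    hM.sqrt * hM.sqrt = M :=
  CFC.sqrt_mul_sqrt_self M (Matrix.nonneg_iff_posSemidef.mpr hM)

open scoped MatrixOrder in
lemma Matrix.PosSemidef.eq_sqrt_of_sq_eq {M B : Matrix n n ℂ} {hM : M.PosSemidef}
    (hB : B.PosSemidef) (h : B ^ 2 = M) : B = hM.sqrt := by
  have h1 : B * B = M := by rw [← h, pow_two]
  exact (CFC.sqrt_unique h1 (Matrix.nonneg_iff_posSemidef.mpr hB)).symm

open scoped MatrixOrder in
lemma Matrix.PosSemidef.eq_of_sq_eq_sq {A B : Matrix n n ℂ} (hA : A.PosSemidef)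
    (hB : B.PosSemidef) (h : A ^ 2 = B ^ 2) : A = B := by
  rw [← CFC.sqrt_sq A (Matrix.nonneg_iff_posSemidef.mpr hA), h,
    CFC.sqrt_sq B (Matrix.nonneg_iff_posSemidef.mpr hB)]

/-- The geometric mean of two positive definite matrices. -/
noncomputable def gmean (hA : A.PosDef) (hB : B.PosDef) : Matrix n n ℂ :=
  mpow A (1/2 : ℝ) *
    ((posDef_conj_pd hB (mpow_posDef hA (-(1/2) : ℝ))).posSemidef).sqrt *
    mpow A (1/2 : ℝ)

lemma gmean_isHermitian (hA : A.PosDef) (hB : B.PosDef) : (gmean hA hB).IsHermitian := by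
  unfold gmean
  set S := ((posDef_conj_pd hB (mpow_posDef hA (-(1/2) : ℝ))).posSemidef).sqrt with hS
  have hSh : S.IsHermitian := (Matrix.PosSemidef.posSemidef_sqrt _).1
  have hRh : (mpow A (1/2 : ℝ)).IsHermitian := mpow_isHermitian hA.1 _
  show _ᴴ = _
  rw [Matrix.conjTranspose_mul, Matrix.conjTranspose_mul, hSh, hRh, Matrix.mul_assoc]

lemma mpow_half_mul_half (hA : A.PosDef) : mpow A (1/2 : ℝ) * mpow A (-(1/2) : ℝ) = 1 := by
  rw [mpow_mul_mpow hA]; norm_num; exact mpow_zero hA.1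

lemma mpow_nhalf_mul_half (hA : A.PosDef) : mpow A (-(1/2) : ℝ) * mpow A (1/2 : ℝ) = 1 := by
  rw [mpow_mul_mpow hA]; norm_num; exact mpow_zero hA.1

lemma mpow_nhalf_sq (hA : A.PosDef) : mpow A (-(1/2) : ℝ) * mpow A (-(1/2) : ℝ) = A⁻¹ := by
  rw [mpow_mul_mpow hA]; norm_num; exact mpow_neg_one hA

lemma mpow_half_sq (hA : A.PosDef) : mpow A (1/2 : ℝ) * mpow A (1/2 : ℝ) = A := by
  rw [mpow_mul_mpow hA]; norm_num; exact mpow_one hA.1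

lemma gmean_conj_inv (hA : A.PosDef) (hB : B.PosDef) :
    gmean hA hB * A⁻¹ * gmean hA hB = B := by
  unfold gmean
  set R := mpow A (1/2 : ℝ) with hR
  set Ri := mpow A (-(1/2) : ℝ) with hRi
  set S := ((posDef_conj_pd hB (mpow_posDef hA (-(1/2) : ℝ))).posSemidef).sqrt with hS
  have hSS : S * S = Ri * B * Ri := Matrix.PosSemidef.sqrt_mul_self _
  have hRAR : R * A⁻¹ * R = 1 := by
    rw [show A⁻¹ = Ri * Ri from (mpow_nhalf_sq hA).symm, ← Matrix.mul_assoc,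
      Matrix.mul_assoc (R * Ri), hR, hRi, mpow_half_mul_half hA, mpow_nhalf_mul_half hA,
      Matrix.one_mul]
  calc R * S * R * A⁻¹ * (R * S * R)
      = R * S * (R * A⁻¹ * R) * S * R := by noncomm_ring
    _ = R * (S * S) * R := by rw [hRAR]; noncomm_ring
    _ = (R * Ri) * B * (Ri * R) := by rw [hSS]; noncomm_ring
    _ = B := by rw [hR, hRi, mpow_half_mul_half hA, mpow_nhalf_mul_half hA,
          Matrix.one_mul, Matrix.mul_one]

lemma gmean_block_psd (hA : A.PosDef) (hB : B.PosDef) :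
    (Matrix.fromBlocks A (gmean hA hB) (gmean hA hB)ᴴ B).PosSemidef := by
  haveI : Invertible A := A.invertibleOfIsUnitDet (isUnit_iff_ne_zero.mpr (ne_of_gt hA.det_pos))
  rw [Matrix.PosDef.fromBlocks₁₁ _ _ hA]
  rw [(gmean_isHermitian hA hB)]
  rw [gmean_conj_inv hA hB]
  simpa using Matrix.PosSemidef.zero

lemma gmean_max (hA : A.PosDef) (hB : B.PosDef) (hZ : Z.IsHermitian)
    (h : (Matrix.fromBlocks A Z Zᴴ B).PosSemidef) : loewner Z (gmean hA hB) := by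
  haveI : Invertible A := A.invertibleOfIsUnitDet (isUnit_iff_ne_zero.mpr (ne_of_gt hA.det_pos))
  rw [Matrix.PosDef.fromBlocks₁₁ _ _ hA] at h
  rw [hZ] at h
  set R := mpow A (1/2 : ℝ) with hR
  set Ri := mpow A (-(1/2) : ℝ) with hRi
  have hRh : R.IsHermitian := mpow_isHermitian hA.1 _
  have hRih : Ri.IsHermitian := mpow_isHermitian hA.1 _
  set S := ((posDef_conj_pd hB (mpow_posDef hA (-(1/2) : ℝ))).posSemidef).sqrt with hS
  have hSpsd : S.PosSemidef := Matrix.PosSemidef.posSemidef_sqrt _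
  have hSS : S * S = Ri * B * Ri := Matrix.PosSemidef.sqrt_mul_self _
  set Y := Ri * Z * Ri with hY
  have hYh : Y.IsHermitian := by
    show _ᴴ = _
    rw [hY, Matrix.conjTranspose_mul, Matrix.conjTranspose_mul, hZ, hRih, Matrix.mul_assoc]
  -- loewner (Y * Y) (S * S)
  have h1 : loewner (Z * A⁻¹ * Z) B := by
    unfold loewner; exact h
  have h2 := loewner_conj h1 Ri
  rw [hRih] at h2
  have e1 : Ri * (Z * A⁻¹ * Z) * Ri = Y * Y := by
    rw [hY, show A⁻¹ = Ri * Ri from (mpow_nhalf_sq hA).symm]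
    noncomm_ring
  have e2 : Ri * B * Ri = S * S := hSS.symm
  rw [e1, e2] at h2
  -- |Y| and conclusion
  set P := sfun hYh (fun t => |t|) with hP
  have hPpsd : P.PosSemidef := sfun_posSemidef hYh fun i => abs_nonneg _
  have hPP : P * P = Y * Y := by
    rw [hP, sfun_mul]
    have hYY : Y * Y = sfun hYh fun t => t * t := by
      rw [← sfun_mul hYh, sfun_id hYh]
    rw [hYY]
    exact sfun_congr hYh fun i => abs_mul_abs_self _
  have h3 : loewner P S := sq_le_sq_psd hPpsd hSpsd (by rw [hPP]; exact h2)
  have h4 : loewner Y P := by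
    unfold loewner
    have : P - Y = sfun hYh fun t => |t| - t := by
      rw [hP, ← sfun_sub, sfun_id]
    rw [this]
    exact sfun_posSemidef hYh fun i => sub_nonneg.mpr (le_abs_self _)
  have h5 : loewner Y S := loewner_trans h4 h3
  have h6 := loewner_conj h5 R
  rw [hRh] at h6
  have e3 : R * Y * R = Z := by
    rw [hY, ← Matrix.mul_assoc, ← Matrix.mul_assoc, Matrix.mul_assoc _ Ri R, hR, hRi,
      mpow_half_mul_half hA, mpow_nhalf_mul_half hA, Matrix.mul_one, Matrix.one_mul]
  rw [e3] at h6
  exact h6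

lemma gmean_mono {A₁ B₁ A₂ B₂ : Matrix n n ℂ} (hA₁ : A₁.PosDef) (hB₁ : B₁.PosDef)
    (hA₂ : A₂.PosDef) (hB₂ : B₂.PosDef) (h1 : loewner A₁ A₂) (h2 : loewner B₁ B₂) :
    loewner (gmean hA₁ hB₁) (gmean hA₂ hB₂) := by
  apply gmean_max hA₂ hB₂ (gmean_isHermitian hA₁ hB₁)
  have hblock : Matrix.fromBlocks A₂ (gmean hA₁ hB₁) (gmean hA₁ hB₁)ᴴ B₂ =
      Matrix.fromBlocks A₁ (gmean hA₁ hB₁) (gmean hA₁ hB₁)ᴴ B₁ +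
      Matrix.fromBlocks (A₂ - A₁) 0 0 (B₂ - B₁) := by
    rw [Matrix.fromBlocks_add, Matrix.fromBlocks_inj]
    refine ⟨by abel, by abel, by abel, by abel⟩
  rw [hblock]
  exact (gmean_block_psd hA₁ hB₁).add (posSemidef_fromBlocks_diag h1 h2)

lemma herm_half_add {X Y : Matrix n n ℂ} (hX : X.IsHermitian) (hY : Y.IsHermitian) :
    ((1/2 : ℝ) • (X + Y)).IsHermitian := by
  show _ᴴ = _
  rw [realsmul, Matrix.conjTranspose_smul, Matrix.conjTranspose_add, hX, hY]
  congr 1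
  simp [Complex.conj_ofReal]

lemma gmean_concave {A₁ B₁ A₂ B₂ : Matrix n n ℂ} (hA₁ : A₁.PosDef) (hB₁ : B₁.PosDef)
    (hA₂ : A₂.PosDef) (hB₂ : B₂.PosDef)
    (hAm : ((1/2 : ℝ) • (A₁ + A₂)).PosDef) (hBm : ((1/2 : ℝ) • (B₁ + B₂)).PosDef) :
    loewner ((1/2 : ℝ) • (gmean hA₁ hB₁ + gmean hA₂ hB₂)) (gmean hAm hBm) := by
  set G₁ := gmean hA₁ hB₁
  set G₂ := gmean hA₂ hB₂
  have hG₁ := gmean_isHermitian hA₁ hB₁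
  have hG₂ := gmean_isHermitian hA₂ hB₂
  have hGm : ((1/2 : ℝ) • (G₁ + G₂)).IsHermitian := herm_half_add hG₁ hG₂
  apply gmean_max hAm hBm hGm
  have hsum : (Matrix.fromBlocks A₁ G₁ G₁ᴴ B₁ + Matrix.fromBlocks A₂ G₂ G₂ᴴ B₂).PosSemidef :=
    (gmean_block_psd hA₁ hB₁).add (gmean_block_psd hA₂ hB₂)
  have hblock : Matrix.fromBlocks ((1/2 : ℝ) • (A₁ + A₂)) ((1/2 : ℝ) • (G₁ + G₂))
      ((1/2 : ℝ) • (G₁ + G₂))ᴴ ((1/2 : ℝ) • (B₁ + B₂)) =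
      (1/2 : ℝ) • (Matrix.fromBlocks A₁ G₁ G₁ᴴ B₁ + Matrix.fromBlocks A₂ G₂ G₂ᴴ B₂) := by
    rw [show ((1/2 : ℝ) • (G₁ + G₂))ᴴ = (1/2 : ℝ) • (G₁ + G₂) from hGm,
      Matrix.fromBlocks_add, Matrix.fromBlocks_smul, Matrix.fromBlocks_inj]
    refine ⟨rfl, rfl, ?_, rfl⟩
    rw [hG₁, hG₂]
  rw [hblock, realsmul]
  exact posSemidef_rsmul hsum (by norm_num)

lemma mpow_mpow_half {C : Matrix n n ℂ} (hC : C.PosDef) (p : ℝ) :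
    mpow (mpow C p) (1/2 : ℝ) = mpow C (p/2) := by
  have hX : (mpow C p).PosDef := mpow_posDef hC p
  apply Matrix.PosSemidef.eq_of_sq_eq_sq (mpow_posDef hX (1/2 : ℝ)).posSemidef
    (mpow_posDef hC (p/2)).posSemidef
  rw [pow_two, pow_two, mpow_half_sq hX, mpow_mul_mpow hC]
  norm_num

lemma mpow_mpow_nhalf {C : Matrix n n ℂ} (hC : C.PosDef) (p : ℝ) :
    mpow (mpow C p) (-(1/2) : ℝ) = mpow C (-(p/2)) := by
  have hX : (mpow C p).PosDef := mpow_posDef hC p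
  apply Matrix.PosSemidef.eq_of_sq_eq_sq (mpow_posDef hX (-(1/2) : ℝ)).posSemidef
    (mpow_posDef hC (-(p/2))).posSemidef
  rw [pow_two, pow_two, mpow_nhalf_sq hX, mpow_inv hC, mpow_mul_mpow hC]
  ring_nf

lemma gmean_mpow {C : Matrix n n ℂ} (hC : C.PosDef) (p q : ℝ) :
    gmean (mpow_posDef hC p) (mpow_posDef hC q) = mpow C ((p+q)/2) := by
  unfold gmean
  rw [mpow_mpow_half hC p]
  have hM : mpow (mpow C p) (-(1/2) : ℝ) * mpow C q * mpow (mpow C p) (-(1/2) : ℝ) =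
      mpow C (q - p) := by
    rw [mpow_mpow_nhalf hC p, mpow_mul_mpow hC, mpow_mul_mpow hC]
    ring_nf
  have hsqrt : mpow C ((q-p)/2) =
      ((posDef_conj_pd (mpow_posDef hC q) (mpow_posDef (mpow_posDef hC p) (-(1/2) : ℝ))).posSemidef).sqrt := by
    apply Matrix.PosSemidef.eq_sqrt_of_sq_eq (mpow_posDef hC ((q-p)/2)).posSemidef
    rw [pow_two, mpow_mul_mpow hC, hM]
    ring_nf
  rw [← hsqrt, mpow_mul_mpow hC, mpow_mul_mpow hC]
  ring_nf

end S5
section S6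
variable {n : Type*} [Fintype n] [DecidableEq n] {A B : Matrix n n ℂ}

lemma posDef_rsmul {M : Matrix n n ℂ} (hM : M.PosDef) {r : ℝ} (hr : 0 < r) :
    ((r : ℝ) • M).PosDef := by
  rw [realsmul]
  refine Matrix.PosDef.of_dotProduct_mulVec_pos ?_ ?_
  · unfold Matrix.IsHermitian
    rw [Matrix.conjTranspose_smul, hM.1]
    congr 1
    simp [Complex.conj_ofReal]
  · intro x hx
    rw [Matrix.smul_mulVec, dotProduct_smul]
    have h1 := hM.dotProduct_mulVec_pos hx
    rw [Complex.lt_def] at h1 ⊢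
    obtain ⟨h1re, h1im⟩ := h1
    constructor
    · simp only [smul_eq_mul, Complex.mul_re, Complex.ofReal_re, Complex.ofReal_im,
        Complex.zero_re] at *
      nlinarith
    · simp only [smul_eq_mul, Complex.mul_im, Complex.ofReal_re, Complex.ofReal_im,
        Complex.zero_im] at *
      rw [← h1im]
      ring

lemma posDef_half_add (hA : A.PosDef) (hB : B.PosDef) : ((1/2 : ℝ) • (A + B)).PosDef :=
  posDef_rsmul (hA.add hB) (by norm_num)

def Kprop (n : Type*) [Fintype n] [DecidableEq n] (p : ℝ) : Prop :=
  ∀ (A B : Matrix n n ℂ), A.PosDef → B.PosDef →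
    loewner ((1/2 : ℝ) • (mpow A p + mpow B p)) (mpow ((1/2 : ℝ) • (A + B)) p)

lemma Kprop_zero : Kprop n 0 := by
  intro A B hA hB
  rw [mpow_zero hA.1, mpow_zero hB.1, mpow_zero (posDef_half_add hA hB).1]
  have : (1/2 : ℝ) • ((1 : Matrix n n ℂ) + 1) = 1 := by
    rw [realsmul]
    module
  rw [this]
  exact loewner_refl 1

lemma Kprop_one : Kprop n 1 := by
  intro A B hA hB
  rw [mpow_one hA.1, mpow_one hB.1, mpow_one (posDef_half_add hA hB).1]
  exact loewner_refl _

lemma Kprop_mid {p q : ℝ} (hp : Kprop n p) (hq : Kprop n q) : Kprop n ((p + q)/2) := by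
  intro A B hA hB
  have hC : ((1/2 : ℝ) • (A + B)).PosDef := posDef_half_add hA hB
  set C := (1/2 : ℝ) • (A + B) with hCdef
  have h1 : loewner ((1/2 : ℝ) • (mpow A p + mpow B p)) (mpow C p) := hp A B hA hB
  have h2 : loewner ((1/2 : ℝ) • (mpow A q + mpow B q)) (mpow C q) := hq A B hA hB
  have hW1 : ((1/2 : ℝ) • (mpow A p + mpow B p)).PosDef :=
    posDef_half_add (mpow_posDef hA p) (mpow_posDef hB p)
  have hW2 : ((1/2 : ℝ) • (mpow A q + mpow B q)).PosDef :=
    posDef_half_add (mpow_posDef hA q) (mpow_posDef hB q)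
  have step1 : loewner ((1/2 : ℝ) • (mpow A ((p+q)/2) + mpow B ((p+q)/2)))
      (gmean hW1 hW2) := by
    have := gmean_concave (mpow_posDef hA p) (mpow_posDef hA q)
      (mpow_posDef hB p) (mpow_posDef hB q) hW1 hW2
    rwa [gmean_mpow hA p q, gmean_mpow hB p q] at this
  have step2 : loewner (gmean hW1 hW2) (gmean (mpow_posDef hC p) (mpow_posDef hC q)) :=
    gmean_mono hW1 hW2 (mpow_posDef hC p) (mpow_posDef hC q) h1 h2
  have := loewner_trans step1 step2
  rwa [gmean_mpow hC p q] at this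

lemma Kprop_dyadic : ∀ (m k : ℕ), k ≤ 2^m → Kprop n ((k : ℝ) / 2^m) := by
  intro m
  induction m with
  | zero =>
    intro k hk
    interval_cases k
    · simpa using Kprop_zero
    · simpa using Kprop_one
  | succ m ih =>
    intro k hk
    rcases Nat.even_or_odd k with ⟨j, hj⟩ | ⟨j, hj⟩
    · have hjle : j ≤ 2^m := by omega
      have := ih j hjle
      have heq : ((k : ℝ) / 2^(m+1)) = (j : ℝ) / 2^m := by
        subst hj
        push_cast
        rw [pow_succ]
        field_simp
        ring
      rwa [heq]
    · have hj1 : j + 1 ≤ 2^m := by omega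
      have hj0 : j ≤ 2^m := by omega
      have hmid := Kprop_mid (n := n) (ih j hj0) (ih (j+1) hj1)
      have heq : ((j : ℝ)/2^m + (((j+1 : ℕ)) : ℝ)/2^m)/2 = (k : ℝ) / 2^(m+1) := by
        subst hj
        push_cast
        rw [pow_succ]
        field_simp
        ring
      rwa [heq] at hmid

lemma rpow_continuous_in_exp {a : ℝ} (ha : 0 < a) : Continuous fun q : ℝ => a ^ q := by
  have : (fun q : ℝ => a ^ q) = fun q => Real.exp (Real.log a * q) := by
    funext q
    rw [Real.rpow_def_of_pos ha]
  rw [this]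
  exact Real.continuous_exp.comp (continuous_const.mul continuous_id)

/-- Midpoint concavity of `A ↦ A^p` for `p ∈ [0,1]`. -/
lemma powConcave {p : ℝ} (hp0 : 0 ≤ p) (hp1 : p ≤ 1) : Kprop n p := by
  intro A B hA hB
  have hC : ((1/2 : ℝ) • (A + B)).PosDef := posDef_half_add hA hB
  set C := (1/2 : ℝ) • (A + B) with hCdef
  unfold loewner
  refine Matrix.PosSemidef.of_dotProduct_mulVec_nonneg ?_ ?_
  · exact (mpow_isHermitian hC.1 p).sub
      (herm_half_add (mpow_isHermitian hA.1 p) (mpow_isHermitian hB.1 p))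
  · intro x
    -- weight functions
    set wA : n → ℝ := fun k =>
      Complex.normSq ((star (hA.1.eigenvectorUnitary : Matrix n n ℂ) *ᵥ x) k) with hwA
    set wB : n → ℝ := fun k =>
      Complex.normSq ((star (hB.1.eigenvectorUnitary : Matrix n n ℂ) *ᵥ x) k) with hwB
    set wC : n → ℝ := fun k =>
      Complex.normSq ((star (hC.1.eigenvectorUnitary : Matrix n n ℂ) *ᵥ x) k) with hwC
    set φ : ℝ → ℝ := fun q =>
      (∑ k, hC.1.eigenvalues k ^ q * wC k) -
        ((∑ k, hA.1.eigenvalues k ^ q * wA k) + (∑ k, hB.1.eigenvalues k ^ q * wB k))/2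
      with hφ
    have hval : ∀ q : ℝ, dotProduct (star x)
        ((mpow C q - (1/2 : ℝ) • (mpow A q + mpow B q)) *ᵥ x) = ((φ q : ℝ) : ℂ) := by
      intro q
      rw [Matrix.sub_mulVec, dotProduct_sub, realsmul, Matrix.smul_mulVec,
        dotProduct_smul, Matrix.add_mulVec, dotProduct_add]
      rw [mpow_eq_sfun hA.1, mpow_eq_sfun hB.1, mpow_eq_sfun hC.1,
        quad_sfun hA.1 _ x, quad_sfun hB.1 _ x, quad_sfun hC.1 _ x]
      simp only [hφ, hwA, hwB, hwC, smul_eq_mul]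
      push_cast
      ring
    have hnonneg : ∀ (q : ℝ), Kprop n q → 0 ≤ φ q := by
      intro q hK
      have := (hK A B hA hB).dotProduct_mulVec_nonneg x
      rw [hval q] at this
      exact Complex.zero_le_real.mp this
    -- the dyadic sequence
    set seq : ℕ → ℝ := fun m => ((⌊p * 2^m⌋₊ : ℕ) : ℝ) / 2^m with hseq
    have hseqK : ∀ m, 0 ≤ φ (seq m) := by
      intro m
      apply hnonneg
      apply Kprop_dyadic m
      have : p * 2^m ≤ ((2^m : ℕ) : ℝ) := by
        push_cast
        nlinarith [pow_pos (show (0:ℝ) < 2 by norm_num) m]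
      calc ⌊p * 2^m⌋₊ ≤ ⌊((2^m : ℕ) : ℝ)⌋₊ := Nat.floor_le_floor this
        _ = 2^m := Nat.floor_natCast _
    have hcont : Continuous φ := by
      apply Continuous.sub
      · exact continuous_finset_sum _ fun k _ =>
          ((rpow_continuous_in_exp (hC.eigenvalues_pos k)).mul continuous_const)
      · apply Continuous.div_const
        exact Continuous.add
          (continuous_finset_sum _ fun k _ =>
            ((rpow_continuous_in_exp (hA.eigenvalues_pos k)).mul continuous_const))
          (continuous_finset_sum _ fun k _ =>
            ((rpow_continuous_in_exp (hB.eigenvalues_pos k)).mul continuous_const))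
    have hseq_tendsto : Filter.Tendsto seq Filter.atTop (nhds p) := by
      have hub : ∀ m, seq m ≤ p := by
        intro m
        rw [hseq]
        have h2m : (0:ℝ) < 2^m := pow_pos (by norm_num) m
        rw [div_le_iff₀ h2m]
        exact Nat.floor_le (by positivity)
      have hlb : ∀ m, p - (1/2 : ℝ)^m ≤ seq m := by
        intro m
        rw [hseq]
        have h2m : (0:ℝ) < 2^m := pow_pos (by norm_num) m
        have hfl := Nat.lt_floor_add_one (p * 2^m)
        rw [sub_le_iff_le_add, div_pow, one_pow, ← add_div, le_div_iff₀ h2m]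
        nlinarith [hfl]
      have hlo : Filter.Tendsto (fun m : ℕ => p - (1/2 : ℝ)^m) Filter.atTop (nhds p) := by
        have := tendsto_pow_atTop_nhds_zero_of_lt_one (show (0:ℝ) ≤ 1/2 by norm_num)
          (show (1/2:ℝ) < 1 by norm_num)
        have h2 := Filter.Tendsto.const_sub p this
        simpa using h2
      exact tendsto_of_tendsto_of_tendsto_of_le_of_le hlo tendsto_const_nhds hlb hub
    have hφp : 0 ≤ φ p :=
      ge_of_tendsto ((hcont.tendsto p).comp hseq_tendsto)
        (Filter.Eventually.of_forall hseqK)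
    rw [hval p]
    exact Complex.zero_le_real.mpr hφp

end S6
section S7
variable {l : Type*} [Fintype l] [DecidableEq l]

/-- Quadratic form as a linear functional in the matrix argument. -/
noncomputable def quadLM (x : l → ℂ) : Matrix l l ℂ →ₗ[ℂ] ℂ where
  toFun M := dotProduct (star x) (M *ᵥ x)
  map_add' M N := by
    rw [Matrix.add_mulVec, dotProduct_add]
  map_smul' c M := by
    rw [Matrix.smul_mulVec, dotProduct_smul, smul_eq_mul, RingHom.id_apply,
      smul_eq_mul]

lemma quadLM_apply (x : l → ℂ) (M : Matrix l l ℂ) :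
    quadLM x M = dotProduct (star x) (M *ᵥ x) := rfl

lemma vecMulVec_psd (g : l → ℂ) : (Matrix.vecMulVec g (star g)).PosSemidef := by
  refine Matrix.PosSemidef.of_dotProduct_mulVec_nonneg ?_ ?_
  · show _ᴴ = _
    ext i j
    simp only [Matrix.conjTranspose_apply, Matrix.vecMulVec_apply, Pi.star_apply, star_mul',
      star_star]
    ring
  · intro x
    have hexp : dotProduct (star x) (Matrix.vecMulVec g (star g) *ᵥ x) =
        star (dotProduct (star g) x) * (dotProduct (star g) x) := by
      have h1 : star (dotProduct (star g) x) = dotProduct (star x) g := by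
        rw [Matrix.star_dotProduct, star_star]
      rw [h1]
      simp only [dotProduct, Matrix.mulVec, Matrix.vecMulVec_apply, Pi.star_apply,
        Finset.sum_mul, Finset.mul_sum]
      rw [Finset.sum_comm]
      refine Finset.sum_congr rfl fun i _ => Finset.sum_congr rfl fun j _ => ?_
      ring
    rw [hexp]
    exact star_mul_self_nonneg _

lemma scalar_conv {a b p q s : ℂ} {t : ℝ} (h0 : 0 < t) (h1 : t < 1) (hpos : 0 ≤ s)
    (hexp : s = ((1 - t : ℝ) : ℂ)^2 * a - ((t*(1-t) : ℝ) : ℂ) * p - ((t*(1-t) : ℝ) : ℂ) * q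
      + ((t : ℝ) : ℂ)^2 * b) :
    a + p + q + b ≤ ((t⁻¹ : ℝ) : ℂ) * a + (((1 - t)⁻¹ : ℝ) : ℂ) * b := by
  have hts : ((t : ℝ) : ℂ) ≠ 0 := by
    simp only [ne_eq, Complex.ofReal_eq_zero]; linarith
  have h1ts : ((1 - t : ℝ) : ℂ) ≠ 0 := by
    simp only [ne_eq, Complex.ofReal_eq_zero]; linarith
  rw [← sub_nonneg]
  have ht0 : t ≠ 0 := by linarith
  have h1t0 : (1 - t) ≠ 0 := by linarith
  have e1 : (t⁻¹ : ℝ) = (t*(1-t))⁻¹ * (1-t) := by field_simp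
  have e2 : ((1-t)⁻¹ : ℝ) = (t*(1-t))⁻¹ * t := by field_simp
  have hr : ((t*(1-t))⁻¹ : ℝ) * (t*(1-t)) = 1 :=
    inv_mul_cancel₀ (mul_ne_zero ht0 h1t0)
  have hrC := congrArg (Complex.ofReal) hr
  push_cast at hrC
  have hfactor : ((t⁻¹ : ℝ) : ℂ) * a + (((1 - t)⁻¹ : ℝ) : ℂ) * b - (a + p + q + b) =
      (((t*(1-t))⁻¹ : ℝ) : ℂ) * s := by
    rw [hexp, e1, e2]
    push_cast
    linear_combination (a + b + p + q) * hrC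
  rw [hfactor]
  apply mul_nonneg _ hpos
  rw [Complex.zero_le_real]
  have hpos2 : 0 < t * (1 - t) := by nlinarith
  exact (inv_nonneg.mpr hpos2.le)

/-- Convexity-type scalar inequality for quadratic forms of a psd matrix. -/
lemma quad_conv {S : Matrix l l ℂ} (hS : S.PosSemidef) (u v : l → ℂ) {t : ℝ}
    (h0 : 0 < t) (h1 : t < 1) :
    dotProduct (star (u + v)) (S *ᵥ (u + v)) ≤
      ((t⁻¹ : ℝ) : ℂ) * dotProduct (star u) (S *ᵥ u) +
      (((1 - t)⁻¹ : ℝ) : ℂ) * dotProduct (star v) (S *ᵥ v) := by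
  have hquad : dotProduct (star (u + v)) (S *ᵥ (u + v)) =
      dotProduct (star u) (S *ᵥ u) + dotProduct (star u) (S *ᵥ v) +
      dotProduct (star v) (S *ᵥ u) + dotProduct (star v) (S *ᵥ v) := by
    rw [star_add, Matrix.mulVec_add, dotProduct_add, add_dotProduct,
      add_dotProduct]
    ring
  rw [hquad]
  set w : l → ℂ := (((1 - t) : ℝ) : ℂ) • u - ((t : ℝ) : ℂ) • v with hw
  refine scalar_conv h0 h1 (hS.dotProduct_mulVec_nonneg w) ?_
  rw [hw, star_sub, star_smul, star_smul, Matrix.mulVec_sub, Matrix.mulVec_smul,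
    Matrix.mulVec_smul, dotProduct_sub, sub_dotProduct, sub_dotProduct,
    smul_dotProduct, smul_dotProduct, smul_dotProduct,
    smul_dotProduct, dotProduct_smul, dotProduct_smul,
    dotProduct_smul, dotProduct_smul]
  simp only [smul_eq_mul, Complex.star_def, Complex.conj_ofReal]
  push_cast
  ring

/-- A strictly positive map preserves positive semidefiniteness. -/
lemma phi_psd {n : Type*} [Fintype n] [DecidableEq n]
    (Φ : Matrix n n ℂ →ₗ[ℂ] Matrix l l ℂ)
    (hΦ : ∀ A : Matrix n n ℂ, A.PosDef → (Φ A).PosDef)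
    {M : Matrix n n ℂ} (hM : M.PosSemidef) : (Φ M).PosSemidef := by
  have hM1 : (M + 1).PosDef := Matrix.PosDef.posSemidef_add hM Matrix.PosDef.one
  have hherm : (Φ M).IsHermitian := by
    have : Φ M = Φ (M + 1) - Φ 1 := by rw [← map_sub, add_sub_cancel_right]
    rw [this]
    exact (hΦ _ hM1).1.sub (hΦ _ Matrix.PosDef.one).1
  refine Matrix.PosSemidef.of_dotProduct_mulVec_nonneg hherm fun x => ?_
  set a := dotProduct (star x) (Φ M *ᵥ x) with ha
  set b := dotProduct (star x) (Φ 1 *ᵥ x) with hb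
  have hbnn : 0 ≤ b := (hΦ 1 Matrix.PosDef.one).posSemidef.dotProduct_mulVec_nonneg x
  have hstep : ∀ ε : ℝ, 0 < ε → 0 ≤ a + (ε : ℂ) * b := by
    intro ε hε
    have hpd : (M + (ε : ℝ) • (1 : Matrix n n ℂ)).PosDef :=
      Matrix.PosDef.posSemidef_add hM (posDef_rsmul Matrix.PosDef.one hε)
    have hq := (hΦ _ hpd).posSemidef.dotProduct_mulVec_nonneg x
    have : Φ (M + (ε : ℝ) • (1 : Matrix n n ℂ)) = Φ M + (ε : ℂ) • Φ 1 := by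
      rw [map_add, realsmul, LinearMap.map_smul]
    rw [this, Matrix.add_mulVec, dotProduct_add, Matrix.smul_mulVec,
      dotProduct_smul, smul_eq_mul, ← ha, ← hb] at hq
    exact hq
  obtain ⟨hbre, hbim⟩ := complex_nonneg_re hbnn
  have haim : a.im = 0 := by
    have h1 := hstep 1 one_pos
    obtain ⟨_, him⟩ := complex_nonneg_re h1
    simpa [Complex.add_im, Complex.mul_im, hbim] using him
  have hare : 0 ≤ a.re := by
    by_contra hc
    push_neg at hc
    have hεpos : 0 < -a.re / (b.re + 1) := by
      apply div_pos <;> linarith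
    have h2 := hstep _ hεpos
    obtain ⟨h2re, _⟩ := complex_nonneg_re h2
    simp only [Complex.add_re, Complex.mul_re, Complex.ofReal_re, Complex.ofReal_im, hbim] at h2re
    have hb1 : 0 < b.re + 1 := by linarith
    norm_num at h2re
    rw [div_mul_eq_mul_div] at h2re
    have h3 := mul_nonneg h2re hb1.le
    rw [add_mul, div_mul_cancel₀ _ (ne_of_gt hb1)] at h3
    nlinarith [h3]
  rw [Complex.le_def]
  constructor
  · simpa using hare
  · simp [haim]

/-- Quadratic-form lower bound for the inverse of a positive definite matrix. -/
lemma inv_quad_lower {R : Matrix l l ℂ} (hR : R.PosDef) (x w : l → ℂ) :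
    dotProduct (star x) w + dotProduct (star w) x -
      dotProduct (star w) (R *ᵥ w) ≤ dotProduct (star x) (R⁻¹ *ᵥ x) := by
  have hdet : IsUnit R.det := isUnit_iff_ne_zero.mpr (ne_of_gt hR.det_pos)
  set z : l → ℂ := w - R⁻¹ *ᵥ x with hz
  have hpos := hR.posSemidef.dotProduct_mulVec_nonneg z
  have hRiH : (R⁻¹).IsHermitian := hR.inv.1
  have hRz : R *ᵥ z = R *ᵥ w - x := by
    rw [hz, Matrix.mulVec_sub, Matrix.mulVec_mulVec, Matrix.mul_nonsing_inv _ hdet,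
      Matrix.one_mulVec]
  have hstarz : star z = star w - star (R⁻¹ *ᵥ x) := by rw [hz, star_sub]
  have e1 : dotProduct (star (R⁻¹ *ᵥ x)) (R *ᵥ w) = dotProduct (star x) w := by
    rw [Matrix.star_mulVec, hRiH, ← Matrix.dotProduct_mulVec, Matrix.mulVec_mulVec,
      Matrix.nonsing_inv_mul _ hdet, Matrix.one_mulVec]
  have e2 : dotProduct (star (R⁻¹ *ᵥ x)) x =
      dotProduct (star x) (R⁻¹ *ᵥ x) := by
    rw [Matrix.star_mulVec, hRiH, ← Matrix.dotProduct_mulVec]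
  have hexp : dotProduct (star z) (R *ᵥ z) =
      dotProduct (star w) (R *ᵥ w) - dotProduct (star w) x -
        dotProduct (star x) w + dotProduct (star x) (R⁻¹ *ᵥ x) := by
    rw [hstarz, hRz, sub_dotProduct, dotProduct_sub, dotProduct_sub,
      e1, e2]
    ring
  rw [hexp] at hpos
  rw [← sub_nonneg]
  convert hpos using 1
  ring

lemma inv_half_smul {M : Matrix l l ℂ} (hM : M.PosDef) :
    ((1/2 : ℝ) • M)⁻¹ = (2 : ℂ) • M⁻¹ := by
  apply Matrix.inv_eq_right_inv
  rw [realsmul, Matrix.smul_mul, Matrix.mul_smul, smul_smul,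
    Matrix.mul_nonsing_inv _ (isUnit_iff_ne_zero.mpr (ne_of_gt hM.det_pos))]
  norm_num

end S7
section S8
variable {n l : Type*} [Fintype n] [DecidableEq n] [Fintype l] [DecidableEq l]

lemma ando_key2 (Φ : Matrix n n ℂ →ₗ[ℂ] Matrix l l ℂ)
    (hΦ : ∀ A : Matrix n n ℂ, A.PosDef → (Φ A).PosDef)
    {X Y : Matrix n n ℂ} (hX : X.PosDef) (hY : Y.PosDef) (u v : l → ℂ) :
    quadLM (u + v) (Φ ((X + Y)⁻¹)) ≤ quadLM u (Φ X⁻¹) + quadLM v (Φ Y⁻¹) := by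
  have hC : (X + Y).PosDef := hX.add hY
  set H := mpow (X + Y) (-(1/2) : ℝ) with hHdef
  set G := mpow (X + Y) ((1/2) : ℝ) with hGdef
  have hHpd : H.PosDef := mpow_posDef hC _
  have hHh : H.IsHermitian := hHpd.1
  have hGH : G * H = 1 := mpow_half_mul_half hC
  have hHG : H * G = 1 := mpow_nhalf_mul_half hC
  have hHH : H * H = (X + Y)⁻¹ := mpow_nhalf_sq hC
  set A' := H * X * H with hA'def
  have hA'pd : A'.PosDef := posDef_conj_pd hX hHpd
  have hA'h : A'.IsHermitian := hA'pd.1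
  have hHCH : H * (X + Y) * H = 1 := by
    nth_rewrite 1 [show X + Y = mpow (X + Y) 1 from (mpow_one hC.1).symm]
    rw [hHdef, mpow_mul_mpow hC, mpow_mul_mpow hC]
    norm_num
    exact mpow_zero hC.1
  have h1mA' : 1 - A' = H * Y * H := by
    have : H * (X + Y) * H = H * X * H + H * Y * H := by noncomm_ring
    rw [hHCH] at this
    rw [hA'def]
    linear_combination (norm := noncomm_ring) this
  have h1mA'pd : (1 - A').PosDef := by rw [h1mA']; exact posDef_conj_pd hY hHpd
  set lam := hA'h.eigenvalues with hlam
  have hlampos : ∀ k, 0 < lam k := fun k => hA'pd.eigenvalues_pos k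
  have hlamlt1 : ∀ k, lam k < 1 := fun k => eig_lt_one hA'h h1mA'pd k
  set U : Matrix n n ℂ := (hA'h.eigenvectorUnitary : Matrix n n ℂ) with hUdef
  have hUU : U * star U = 1 := (Matrix.mem_unitaryGroup_iff).mp hA'h.eigenvectorUnitary.2
  have hsUU : star U * U = 1 := (Matrix.mem_unitaryGroup_iff').mp hA'h.eigenvectorUnitary.2
  set E := H * U with hEdef
  have hEH : Eᴴ = star U * H := by
    rw [hEdef, Matrix.conjTranspose_mul, ← Matrix.star_eq_conjTranspose U, hHh]
  -- rank-one decomposition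
  have L1 : ∀ c : n → ℝ, E * Matrix.diagonal (fun k => ((c k : ℝ) : ℂ)) * Eᴴ =
      ∑ k, ((c k : ℝ) : ℂ) • Matrix.vecMulVec (fun i => E i k) (star (fun i => E i k)) := by
    intro c
    ext i j
    rw [Matrix.mul_apply]
    simp only [Matrix.mul_diagonal, Matrix.conjTranspose_apply, Matrix.sum_apply,
      Matrix.smul_apply, Matrix.vecMulVec_apply, Pi.star_apply, smul_eq_mul]
    refine Finset.sum_congr rfl fun k _ => ?_
    ring
  -- spectral identities
  have hspec : A' = U * Matrix.diagonal (fun k => ((lam k : ℝ) : ℂ)) * star U := by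
    have := hA'h.spectral_theorem
    simp only [Unitary.conjStarAlgAut_apply, Function.comp_def] at this
    rw [← hUdef] at this
    exact this
  have hdiag_inv : ∀ (d : n → ℝ), (∀ k, d k ≠ 0) →
      (U * Matrix.diagonal (fun k => ((d k : ℝ) : ℂ)) * star U)⁻¹ =
        U * Matrix.diagonal (fun k => (((d k)⁻¹ : ℝ) : ℂ)) * star U := by
    intro d hd
    apply Matrix.inv_eq_right_inv
    calc U * Matrix.diagonal (fun k => ((d k : ℝ) : ℂ)) * star U *
          (U * Matrix.diagonal (fun k => (((d k)⁻¹ : ℝ) : ℂ)) * star U)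
        = U * Matrix.diagonal (fun k => ((d k : ℝ) : ℂ)) * (star U * U) *
            Matrix.diagonal (fun k => (((d k)⁻¹ : ℝ) : ℂ)) * star U := by noncomm_ring
      _ = U * (Matrix.diagonal (fun k => ((d k : ℝ) : ℂ)) *
            Matrix.diagonal (fun k => (((d k)⁻¹ : ℝ) : ℂ))) * star U := by
          rw [hsUU, Matrix.mul_one]; noncomm_ring
      _ = 1 := by
          rw [Matrix.diagonal_mul_diagonal]
          have : (fun k => ((d k : ℝ) : ℂ) * (((d k)⁻¹ : ℝ) : ℂ)) = fun _ => (1 : ℂ) := by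
            funext k
            rw [← Complex.ofReal_mul, mul_inv_cancel₀ (hd k)]
            simp
          rw [this, Matrix.diagonal_one, Matrix.mul_one, hUU]
  have hXGAG : X = G * A' * G := by
    rw [hA'def, ← Matrix.mul_assoc, ← Matrix.mul_assoc, Matrix.mul_assoc _ H G,
      hGdef, hHdef, mpow_half_mul_half hC, mpow_nhalf_mul_half hC, Matrix.mul_one,
      Matrix.one_mul]
  have hGinv : G⁻¹ = H := Matrix.inv_eq_right_inv hGH
  have hXinv : X⁻¹ = E * Matrix.diagonal (fun k => (((lam k)⁻¹ : ℝ) : ℂ)) * Eᴴ := by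
    rw [hXGAG, Matrix.mul_inv_rev, Matrix.mul_inv_rev, hGinv, hspec,
      hdiag_inv lam (fun k => ne_of_gt (hlampos k)), hEH, hEdef]
    noncomm_ring
  have h1mA'spec : 1 - A' = U * Matrix.diagonal (fun k => ((1 - lam k : ℝ) : ℂ)) * star U := by
    have hone : (1 : Matrix n n ℂ) = U * Matrix.diagonal (fun _ => ((1 : ℝ) : ℂ)) * star U := by
      simp [Matrix.diagonal_one, hUU]
    nth_rewrite 1 [hone]
    rw [hspec]
    rw [← Matrix.sub_mul, ← Matrix.mul_sub, Matrix.diagonal_sub]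
    push_cast
    ring_nf
  have hYGAG : Y = G * (1 - A') * G := by
    rw [h1mA', ← Matrix.mul_assoc, ← Matrix.mul_assoc, Matrix.mul_assoc _ H G,
      hGdef, hHdef, mpow_half_mul_half hC, mpow_nhalf_mul_half hC, Matrix.mul_one,
      Matrix.one_mul]
  have hYinv : Y⁻¹ = E * Matrix.diagonal (fun k => (((1 - lam k)⁻¹ : ℝ) : ℂ)) * Eᴴ := by
    rw [hYGAG, Matrix.mul_inv_rev, Matrix.mul_inv_rev, hGinv, h1mA'spec,
      hdiag_inv (fun k => 1 - lam k) (fun k => ne_of_gt (show (0:ℝ) < 1 - lam k by linarith [hlamlt1 k])), hEH, hEdef]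
    noncomm_ring
  have hCinv : (X + Y)⁻¹ = E * Matrix.diagonal (fun k => (((1:ℝ)) : ℂ)) * Eᴴ := by
    have : Matrix.diagonal (fun _ : n => ((1:ℝ) : ℂ)) = 1 := by
      simp [Matrix.diagonal_one]
    rw [this, Matrix.mul_one, hEH, hEdef, ← hHH]
    rw [Matrix.mul_assoc, ← Matrix.mul_assoc U (star U) H, hUU, Matrix.one_mul]
  -- sum expressions for the quadratic forms
  have hsumX : quadLM u (Φ X⁻¹) = ∑ k, (((lam k)⁻¹ : ℝ) : ℂ) *
      quadLM u (Φ (Matrix.vecMulVec (fun i => E i k) (star (fun i => E i k)))) := by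
    rw [hXinv, L1, map_sum, map_sum]
    refine Finset.sum_congr rfl fun k _ => ?_
    rw [LinearMap.map_smul, LinearMap.map_smul, smul_eq_mul]
  have hsumY : quadLM v (Φ Y⁻¹) = ∑ k, (((1 - lam k)⁻¹ : ℝ) : ℂ) *
      quadLM v (Φ (Matrix.vecMulVec (fun i => E i k) (star (fun i => E i k)))) := by
    rw [hYinv, L1, map_sum, map_sum]
    refine Finset.sum_congr rfl fun k _ => ?_
    rw [LinearMap.map_smul, LinearMap.map_smul, smul_eq_mul]
  have hsumC : quadLM (u + v) (Φ ((X + Y)⁻¹)) = ∑ k,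
      quadLM (u + v) (Φ (Matrix.vecMulVec (fun i => E i k) (star (fun i => E i k)))) := by
    rw [hCinv, L1, map_sum, map_sum]
    refine Finset.sum_congr rfl fun k _ => ?_
    rw [LinearMap.map_smul, LinearMap.map_smul, smul_eq_mul, Complex.ofReal_one, one_mul]
  rw [hsumX, hsumY, hsumC, ← Finset.sum_add_distrib]
  refine Finset.sum_le_sum fun k _ => ?_
  have hpsd : (Φ (Matrix.vecMulVec (fun i => E i k) (star (fun i => E i k)))).PosSemidef :=
    phi_psd Φ hΦ (vecMulVec_psd _)
  have := quad_conv hpsd u v (hlampos k) (hlamlt1 k)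
  simpa only [quadLM_apply] using this

end S8
section S9
variable {n l : Type*} [Fintype n] [DecidableEq n] [Fintype l] [DecidableEq l]

lemma ando_concave (Φ : Matrix n n ℂ →ₗ[ℂ] Matrix l l ℂ)
    (hΦ : ∀ A : Matrix n n ℂ, A.PosDef → (Φ A).PosDef)
    {X Y : Matrix n n ℂ} (hX : X.PosDef) (hY : Y.PosDef) :
    loewner ((1/2 : ℝ) • ((Φ X⁻¹)⁻¹ + (Φ Y⁻¹)⁻¹)) ((Φ ((1/2 : ℝ) • (X + Y))⁻¹)⁻¹) := by
  have hPinv : (Φ X⁻¹).PosDef := hΦ _ hX.inv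
  have hQinv : (Φ Y⁻¹).PosDef := hΦ _ hY.inv
  set P := (Φ X⁻¹)⁻¹ with hPdef
  set Q := (Φ Y⁻¹)⁻¹ with hQdef
  have hP : P.PosDef := hPinv.inv
  have hQ : Q.PosDef := hQinv.inv
  have hM : ((1/2 : ℝ) • (X + Y)).PosDef := posDef_half_add hX hY
  set R := Φ (((1/2 : ℝ) • (X + Y))⁻¹) with hRdef
  have hR : R.PosDef := hΦ _ hM.inv
  have hRdecomp : R = (2 : ℂ) • Φ ((X + Y)⁻¹) := by
    rw [hRdef, inv_half_smul (hX.add hY), LinearMap.map_smul]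
  unfold loewner
  refine Matrix.PosSemidef.of_dotProduct_mulVec_nonneg ?_ ?_
  · exact hR.inv.1.sub (herm_half_add hP.1 hQ.1)
  · intro x
    set u : l → ℂ := P *ᵥ x with hu
    set v : l → ℂ := Q *ᵥ x with hv
    set w : l → ℂ := (1/2 : ℂ) • (u + v) with hw
    set a := dotProduct (star x) (P *ᵥ x) with ha
    set b := dotProduct (star x) (Q *ᵥ x) with hb
    have hPdet : IsUnit (Φ X⁻¹).det := isUnit_iff_ne_zero.mpr (ne_of_gt hPinv.det_pos)
    have hQdet : IsUnit (Φ Y⁻¹).det := isUnit_iff_ne_zero.mpr (ne_of_gt hQinv.det_pos)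
    have hPP : P⁻¹ = Φ X⁻¹ := by rw [hPdef, Matrix.nonsing_inv_nonsing_inv _ hPdet]
    have hQQ : Q⁻¹ = Φ Y⁻¹ := by rw [hQdef, Matrix.nonsing_inv_nonsing_inv _ hQdet]
    have hPdet' : IsUnit P.det := isUnit_iff_ne_zero.mpr (ne_of_gt hP.det_pos)
    have hQdet' : IsUnit Q.det := isUnit_iff_ne_zero.mpr (ne_of_gt hQ.det_pos)
    have e_ustar : dotProduct (star u) x = a := by
      rw [hu, Matrix.star_mulVec, hP.1, ← Matrix.dotProduct_mulVec, ha]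
    have e_vstar : dotProduct (star v) x = b := by
      rw [hv, Matrix.star_mulVec, hQ.1, ← Matrix.dotProduct_mulVec, hb]
    have e_uPu : dotProduct (star u) (Φ X⁻¹ *ᵥ u) = a := by
      rw [← hPP, hu, Matrix.mulVec_mulVec, Matrix.nonsing_inv_mul _ hPdet',
        Matrix.one_mulVec, e_ustar]
    have e_vQv : dotProduct (star v) (Φ Y⁻¹ *ᵥ v) = b := by
      rw [← hQQ, hv, Matrix.mulVec_mulVec, Matrix.nonsing_inv_mul _ hQdet',
        Matrix.one_mulVec, e_vstar]
    have e_xw : dotProduct (star x) w = (1/2 : ℂ) * (a + b) := by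
      rw [hw, dotProduct_smul, dotProduct_add, ← ha, ← hb]
      simp [smul_eq_mul]
    have e_wx : dotProduct (star w) x = (1/2 : ℂ) * (a + b) := by
      rw [hw, star_smul, star_add, smul_dotProduct, add_dotProduct,
        e_ustar, e_vstar]
      simp [smul_eq_mul]
    set s := dotProduct (star (u + v)) (Φ ((X + Y)⁻¹) *ᵥ (u + v)) with hs
    have e_wRw : dotProduct (star w) (R *ᵥ w) = (1/2 : ℂ) * s := by
      rw [hw, star_smul, smul_dotProduct, Matrix.mulVec_smul, dotProduct_smul,
        hRdecomp, Matrix.smul_mulVec, dotProduct_smul, ← hs]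
      simp only [smul_eq_mul]
      rw [show star ((1:ℂ)/2) = (1/2 : ℂ) by simp [Complex.ext_iff]]
      ring
    have key1 := inv_quad_lower hR x w
    rw [e_xw, e_wx, e_wRw] at key1
    have key2 := ando_key2 Φ hΦ hX hY u v
    rw [quadLM_apply, quadLM_apply, quadLM_apply, e_uPu, e_vQv, ← hs] at key2
    have h2 : (a + b) - (1/2 : ℂ) * s ≤ dotProduct (star x) (R⁻¹ *ᵥ x) := by
      have e : (1/2 : ℂ) * (a + b) + (1/2 : ℂ) * (a + b) - (1/2 : ℂ) * s =
          (a + b) - (1/2 : ℂ) * s := by ring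
      rwa [e] at key1
    have h3 : 0 ≤ (1/2 : ℂ) * ((a + b) - s) := by
      apply mul_nonneg _ (sub_nonneg.mpr key2)
      rw [show (1/2 : ℂ) = ((1/2 : ℝ) : ℂ) by norm_num, Complex.zero_le_real]
      norm_num
    have etarget : dotProduct (star x)
        ((R⁻¹ - (1/2 : ℝ) • (P + Q)) *ᵥ x) =
        dotProduct (star x) (R⁻¹ *ᵥ x) - (1/2 : ℂ) * (a + b) := by
      rw [Matrix.sub_mulVec, dotProduct_sub, realsmul, Matrix.smul_mulVec,
        dotProduct_smul, Matrix.add_mulVec, dotProduct_add, ← ha, ← hb]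
      push_cast
      simp [smul_eq_mul]
    rw [etarget]
    calc (0 : ℂ) ≤ (1/2 : ℂ) * ((a + b) - s) := h3
      _ = ((a + b) - (1/2 : ℂ) * s) - (1/2 : ℂ) * (a + b) := by ring
      _ ≤ dotProduct (star x) (R⁻¹ *ᵥ x) - (1/2 : ℂ) * (a + b) :=
          sub_le_sub_right h2 _

end S9

/-- If `Φ` is a strictly positive linear map and `0 ≤ p ≤ 1`, then
`A ↦ Φ(A^{-p})⁻¹` is operator (midpoint) concave on positive definite matrices. -/
theorem stmt0 {n l : Type*} [Fintype n] [DecidableEq n] [Fintype l] [DecidableEq l]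
    (Φ : Matrix n n ℂ →ₗ[ℂ] Matrix l l ℂ)
    (hΦ : ∀ A : Matrix n n ℂ, A.PosDef → (Φ A).PosDef)
    (p : ℝ) (hp0 : 0 ≤ p) (hp1 : p ≤ 1)
    (A B : Matrix n n ℂ) (hA : A.PosDef) (hB : B.PosDef) :
    loewner ((1/2 : ℝ) • ((Φ (mpow A (-p)))⁻¹ + (Φ (mpow B (-p)))⁻¹))
      ((Φ (mpow ((1/2 : ℝ) • (A + B)) (-p)))⁻¹) := by
  have hC : ((1/2 : ℝ) • (A + B)).PosDef := posDef_half_add hA hB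
  set C := (1/2 : ℝ) • (A + B) with hCdef
  have hX : (mpow A p).PosDef := mpow_posDef hA p
  have hY : (mpow B p).PosDef := mpow_posDef hB p
  have hW : ((1/2 : ℝ) • (mpow A p + mpow B p)).PosDef := posDef_half_add hX hY
  set W := (1/2 : ℝ) • (mpow A p + mpow B p) with hWdef
  -- Step 1: power concavity
  have step1 : loewner W (mpow C p) := powConcave hp0 hp1 A B hA hB
  -- Step 2: invert
  have step2 : loewner (mpow C p)⁻¹ W⁻¹ := inv_antitone hW (mpow_posDef hC p) step1
  rw [mpow_inv hC p] at step2
  -- Step 3: apply Φ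
  have step3 : loewner (Φ (mpow C (-p))) (Φ W⁻¹) := by
    unfold loewner
    rw [← map_sub]
    exact phi_psd Φ hΦ step2
  -- Step 4: invert again
  have step4 : loewner (Φ W⁻¹)⁻¹ (Φ (mpow C (-p)))⁻¹ :=
    inv_antitone (hΦ _ (mpow_posDef hC (-p))) (hΦ _ hW.inv) step3
  -- Step 5: Ando concavity
  have step5 : loewner ((1/2 : ℝ) • ((Φ (mpow A p)⁻¹)⁻¹ + (Φ (mpow B p)⁻¹)⁻¹))
      ((Φ W⁻¹)⁻¹) := by
    have := ando_concave Φ hΦ hX hY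
    rw [← hWdef] at this
    exact this
  rw [mpow_inv hA p, mpow_inv hB p] at step5
  exact loewner_trans step5 step4
end

section
/- For r ≥ 1 and any positive semidefinite matrix C ∈ Mₘ(ℂ), one has the variational formula Tr(C^{1/r}) = (1/r) · inf over positive definite B ∈ Mₘ(ℂ) of Tr(C B^{1-r} + (r-1)B). -/
open Matrix
open scoped ComplexOrder

section auxCL

variable {n : Type*} [Fintype n] [DecidableEq n]

private lemma amgm_scalar {r c b : ℝ} (hr : 1 ≤ r) (hc : 0 ≤ c) (hb : 0 < b) :
    r * c ^ (1/r) ≤ c * b ^ (1-r) + (r-1) * b := by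
  have hr0 : (0:ℝ) < r := lt_of_lt_of_le one_pos hr
  have hw2 : (0:ℝ) ≤ 1 - 1/r := by
    have : 1/r ≤ 1 := by rw [div_le_one hr0]; exact hr
    linarith
  have key := Real.geom_mean_le_arith_mean2_weighted
    (by positivity : (0:ℝ) ≤ 1/r) hw2 (by positivity : (0:ℝ) ≤ c * b ^ (1-r)) hb.le
    (by field_simp; ring)
  have heq : (c * b ^ (1-r)) ^ (1/r) * b ^ (1 - 1/r) = c ^ (1/r) := by
    rw [Real.mul_rpow hc (by positivity), ← Real.rpow_mul hb.le, mul_assoc,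
      ← Real.rpow_add hb]
    have : (1 - r) * (1/r) + (1 - 1/r) = 0 := by field_simp; ring
    rw [this, Real.rpow_zero, mul_one]
  rw [heq] at key
  have := mul_le_mul_of_nonneg_left key hr0.le
  calc r * c ^ (1/r) ≤ r * (1/r * (c * b ^ (1-r)) + (1 - 1/r) * b) := this
    _ = c * b ^ (1-r) + (r-1) * b := by field_simp

private lemma jensen_rpow {ι : Type*} [Fintype ι] (w lam : ι → ℝ) (hw : ∀ i, 0 ≤ w i)
    (hw' : ∑ i, w i = 1) (hlam : ∀ i, 0 ≤ lam i) {r : ℝ} (hr : 1 ≤ r) :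
    ∑ i, w i * lam i ^ (1/r) ≤ (∑ i, w i * lam i) ^ (1/r) := by
  have hr0 : (0:ℝ) < r := lt_of_lt_of_le one_pos hr
  have key := Real.arith_mean_le_rpow_mean Finset.univ w (fun i => lam i ^ (1/r))
    (fun i _ => hw i) hw' (fun i _ => Real.rpow_nonneg (hlam i) _) hr
  convert key using 3 with i
  rw [← Real.rpow_mul (hlam i), one_div, inv_mul_cancel₀ hr0.ne', Real.rpow_one]

private lemma conj_diag_functional {U V : Matrix n n ℂ}
    (hU : U ∈ Matrix.unitaryGroup n ℂ) (hV : V ∈ Matrix.unitaryGroup n ℂ)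
    (d e : n → ℝ) (f : ℝ → ℝ)
    (h : U * Matrix.diagonal (fun i => (d i : ℂ)) * star U
       = V * Matrix.diagonal (fun i => (e i : ℂ)) * star V) :
    U * Matrix.diagonal (fun i => (f (d i) : ℂ)) * star U
       = V * Matrix.diagonal (fun i => (f (e i) : ℂ)) * star V := by
  have hU1 : star U * U = 1 := (Matrix.mem_unitaryGroup_iff').mp hU
  have hU2 : U * star U = 1 := (Matrix.mem_unitaryGroup_iff).mp hU
  have hV1 : star V * V = 1 := (Matrix.mem_unitaryGroup_iff').mp hV
  have hV2 : V * star V = 1 := (Matrix.mem_unitaryGroup_iff).mp hV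
  set W := star U * V with hW
  have h2 : Matrix.diagonal (fun i => (d i : ℂ)) * W
      = W * Matrix.diagonal (fun i => (e i : ℂ)) := by
    have := congrArg (fun M => star U * M * V) h
    simp only [← Matrix.mul_assoc] at this
    rw [hU1] at this
    simp only [Matrix.one_mul] at this
    calc Matrix.diagonal (fun i => (d i : ℂ)) * W
        = Matrix.diagonal (fun i => (d i : ℂ)) * star U * V := by rw [hW, Matrix.mul_assoc]
      _ = star U * V * Matrix.diagonal (fun i => (e i : ℂ)) * star V * V := this
      _ = W * Matrix.diagonal (fun i => (e i : ℂ)) := by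
          rw [Matrix.mul_assoc, Matrix.mul_assoc, hV1, Matrix.mul_one, hW, Matrix.mul_assoc]
  have h3 : Matrix.diagonal (fun i => (f (d i) : ℂ)) * W
      = W * Matrix.diagonal (fun i => (f (e i) : ℂ)) := by
    ext i j
    have h2ij := congrFun (congrFun h2 i) j
    simp only [Matrix.diagonal_mul, Matrix.mul_diagonal] at h2ij ⊢
    by_cases hz : W i j = 0
    · simp [hz]
    · have hde : d i = e j := by
        have h' : (↑(d i) : ℂ) * W i j = (↑(e j) : ℂ) * W i j := by rw [h2ij, mul_comm]
        exact_mod_cast mul_right_cancel₀ hz h'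
      rw [hde, mul_comm]
  calc U * Matrix.diagonal (fun i => (f (d i) : ℂ)) * star U
      = U * Matrix.diagonal (fun i => (f (d i) : ℂ)) * star U * (V * star V) := by
        rw [hV2, Matrix.mul_one]
    _ = U * (Matrix.diagonal (fun i => (f (d i) : ℂ)) * (star U * V)) * star V := by
        simp only [Matrix.mul_assoc]
    _ = U * (W * Matrix.diagonal (fun i => (f (e i) : ℂ))) * star V := by rw [← hW, h3]
    _ = (U * star U) * (V * Matrix.diagonal (fun i => (f (e i) : ℂ)) * star V) := by
        rw [hW]; simp only [Matrix.mul_assoc]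
    _ = V * Matrix.diagonal (fun i => (f (e i) : ℂ)) * star V := by
        rw [hU2, Matrix.one_mul]

private lemma spectral' {A : Matrix n n ℂ} (hA : A.IsHermitian) :
    A = (hA.eigenvectorUnitary : Matrix n n ℂ) *
      Matrix.diagonal (fun i => ((hA.eigenvalues i : ℝ) : ℂ)) *
      star (hA.eigenvectorUnitary : Matrix n n ℂ) := hA.spectral_theorem

private lemma mpow_eq_conj {A : Matrix n n ℂ} (hA : A.IsHermitian) {V : Matrix n n ℂ}
    (hV : V ∈ Matrix.unitaryGroup n ℂ) (e : n → ℝ)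
    (h : A = V * Matrix.diagonal (fun i => (e i : ℂ)) * star V) (p : ℝ) :
    mpow A p = V * Matrix.diagonal (fun i => ((e i ^ p : ℝ) : ℂ)) * star V := by
  rw [mpow, dif_pos hA]
  exact conj_diag_functional hA.eigenvectorUnitary.2 hV hA.eigenvalues e (fun x => x ^ p)
    ((spectral' hA).symm.trans h)

private lemma posDef_conj {V : Matrix n n ℂ} (hV : V ∈ Matrix.unitaryGroup n ℂ)
    {d : n → ℝ} (hd : ∀ i, 0 < d i) :
    (V * Matrix.diagonal (fun i => (d i : ℂ)) * star V).PosDef := by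
  have hV2 : V * star V = 1 := Matrix.mem_unitaryGroup_iff.mp hV
  have hdiag : (Matrix.diagonal (fun i => (d i : ℂ))).PosDef := by
    rw [Matrix.posDef_diagonal_iff]
    intro i
    exact_mod_cast hd i
  have hstarD : star (Matrix.diagonal (fun i => (d i : ℂ)))
      = Matrix.diagonal (fun i => (d i : ℂ)) := by
    rw [Matrix.star_eq_conjTranspose, Matrix.diagonal_conjTranspose]
    ext i j
    simp [Matrix.diagonal, Matrix.of_apply, Complex.conj_ofReal]
  rw [Matrix.posDef_iff_dotProduct_mulVec]
  constructor
  · show star _ = _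
    rw [StarMul.star_mul, StarMul.star_mul, star_star, hstarD, Matrix.mul_assoc]
  · intro x hx
    have hy : star V *ᵥ x ≠ 0 := by
      intro h0
      apply hx
      have := congrArg (V *ᵥ ·) h0
      simpa [Matrix.mulVec_mulVec, hV2] using this
    have key := (Matrix.posDef_iff_dotProduct_mulVec.mp hdiag).2 hy
    calc (0:ℂ) < dotProduct (star (star V *ᵥ x))
          (Matrix.diagonal (fun i => (d i : ℂ)) *ᵥ (star V *ᵥ x)) := key
      _ = dotProduct (star x)
          ((V * Matrix.diagonal (fun i => (d i : ℂ)) * star V) *ᵥ x) := by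
          rw [Matrix.star_mulVec, ← Matrix.dotProduct_mulVec]
          simp [Matrix.mulVec_mulVec, Matrix.mul_assoc, Matrix.star_eq_conjTranspose]

private lemma trace_conj {V D : Matrix n n ℂ} (hV1 : star V * V = 1) :
    (V * D * star V).trace = D.trace := by
  rw [Matrix.trace_mul_cycle, hV1, Matrix.one_mul]

private lemma conj_mul_conj {V A B : Matrix n n ℂ} (hV1 : star V * V = 1) :
    (V * A * star V) * (V * B * star V) = V * (A * B) * star V := by
  calc (V * A * star V) * (V * B * star V)
      = V * (A * ((star V * V) * (B * star V))) := by simp only [Matrix.mul_assoc]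
    _ = V * (A * B) * star V := by rw [hV1, Matrix.one_mul]; simp only [Matrix.mul_assoc]

private lemma trace_mpow_re {C : Matrix n n ℂ} (hC : C.IsHermitian) (p : ℝ) :
    (Matrix.trace (mpow C p)).re = ∑ k, hC.eigenvalues k ^ p := by
  rw [mpow, dif_pos hC,
    trace_conj (Matrix.mem_unitaryGroup_iff'.mp hC.eigenvectorUnitary.2),
    Matrix.trace_diagonal, Complex.re_sum]
  simp

private lemma lower_bound {r : ℝ} (hr : 1 ≤ r)
    {C : Matrix n n ℂ} (hC : C.PosSemidef) {B : Matrix n n ℂ} (hB : B.PosDef) :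
    r * ∑ k, hC.1.eigenvalues k ^ (1/r) ≤
      (Matrix.trace (C * mpow B (1 - r) + (r - 1) • B)).re := by
  have hr0 : (0:ℝ) < r := lt_of_lt_of_le one_pos hr
  have hV : (hC.1.eigenvectorUnitary : Matrix n n ℂ) ∈ Matrix.unitaryGroup n ℂ :=
    hC.1.eigenvectorUnitary.2
  set V : Matrix n n ℂ := (hC.1.eigenvectorUnitary : Matrix n n ℂ) with hVdef
  set lam : n → ℝ := hC.1.eigenvalues with hlamdef
  have hlam0 : ∀ k, 0 ≤ lam k := hC.eigenvalues_nonneg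
  have hBH : B.IsHermitian := hB.1
  have hU : (hBH.eigenvectorUnitary : Matrix n n ℂ) ∈ Matrix.unitaryGroup n ℂ :=
    hBH.eigenvectorUnitary.2
  set U : Matrix n n ℂ := (hBH.eigenvectorUnitary : Matrix n n ℂ) with hUdef
  set β : n → ℝ := hBH.eigenvalues with hβdef
  have hβ0 : ∀ i, 0 < β i := hB.eigenvalues_pos
  have hU1 : star U * U = 1 := Matrix.mem_unitaryGroup_iff'.mp hU
  have hU2 : U * star U = 1 := Matrix.mem_unitaryGroup_iff.mp hU
  have hV1 : star V * V = 1 := Matrix.mem_unitaryGroup_iff'.mp hV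
  have hV2 : V * star V = 1 := Matrix.mem_unitaryGroup_iff.mp hV
  have hCd : C = V * Matrix.diagonal (fun k => ((lam k : ℝ) : ℂ)) * star V := spectral' hC.1
  have hBd : B = U * Matrix.diagonal (fun i => ((β i : ℝ) : ℂ)) * star U := spectral' hBH
  set W : Matrix n n ℂ := star U * V with hW
  have hsW : star W = star V * U := by rw [hW, StarMul.star_mul, star_star]
  have hWW : W * star W = 1 := by
    rw [hW, hsW, Matrix.mul_assoc, ← Matrix.mul_assoc V, hV2, Matrix.one_mul, hU1]
  have hW'W : star W * W = 1 := by
    rw [hW, hsW, Matrix.mul_assoc, ← Matrix.mul_assoc U, hU2, Matrix.one_mul, hV1]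
  set w : n → n → ℝ := fun i k => Complex.normSq (W i k) with hwdef
  have hw0 : ∀ i k, 0 ≤ w i k := fun i k => Complex.normSq_nonneg _
  have hterm : ∀ i k, W i k * star (W i k) = ((w i k : ℝ) : ℂ) := by
    intro i k
    rw [hwdef, Complex.star_def, Complex.mul_conj]
  have hrow : ∀ i, ∑ k, w i k = 1 := by
    intro i
    have h1 : (W * star W) i i = 1 := by rw [hWW, Matrix.one_apply_eq]
    rw [Matrix.mul_apply] at h1
    simp only [Matrix.star_apply, hterm] at h1
    rw [← Complex.ofReal_sum] at h1
    exact_mod_cast h1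
  have hcol : ∀ k, ∑ i, w i k = 1 := by
    intro k
    have h1 : (star W * W) k k = 1 := by rw [hW'W, Matrix.one_apply_eq]
    rw [Matrix.mul_apply] at h1
    simp only [Matrix.star_apply] at h1
    have h2 : ∀ i, star (W i k) * W i k = ((w i k : ℝ) : ℂ) := fun i => by
      rw [mul_comm]; exact hterm i k
    simp only [h2] at h1
    rw [← Complex.ofReal_sum] at h1
    exact_mod_cast h1
  set c : n → ℝ := fun i => ∑ k, w i k * lam k with hcdef
  have hc0 : ∀ i, 0 ≤ c i := fun i =>
    Finset.sum_nonneg fun k _ => mul_nonneg (hw0 i k) (hlam0 k)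
  have hconj : star U * C * U = W * Matrix.diagonal (fun k => ((lam k : ℝ) : ℂ)) * star W := by
    rw [hCd, hsW, hW]; simp only [Matrix.mul_assoc]
  have hdiagEntry : ∀ i, (star U * C * U) i i = ((c i : ℝ) : ℂ) := by
    intro i
    rw [hconj]
    have h1 : (W * Matrix.diagonal (fun k => ((lam k : ℝ) : ℂ)) * star W) i i
        = ∑ k, W i k * (lam k : ℂ) * star (W i k) := by
      rw [Matrix.mul_apply]
      refine Finset.sum_congr rfl fun k _ => ?_
      rw [Matrix.mul_diagonal, Matrix.star_apply]
    rw [h1, hcdef]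
    push_cast
    refine Finset.sum_congr rfl fun k _ => ?_
    calc W i k * (lam k : ℂ) * star (W i k)
        = (W i k * star (W i k)) * (lam k : ℂ) := by ring
      _ = (w i k : ℂ) * (lam k : ℂ) := by rw [hterm]
  have hmpowB : mpow B (1 - r)
      = U * Matrix.diagonal (fun i => ((β i ^ (1-r) : ℝ) : ℂ)) * star U :=
    mpow_eq_conj hBH hU β hBd (1-r)
  have htr1 : Matrix.trace (C * mpow B (1-r)) = ((∑ i, c i * β i ^ (1-r) : ℝ) : ℂ) := by
    rw [hmpowB]
    have h5 : C * (U * Matrix.diagonal (fun i => ((β i ^ (1-r) : ℝ) : ℂ)) * star U)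
        = U * ((star U * C * U) * Matrix.diagonal (fun i => ((β i ^ (1-r) : ℝ) : ℂ))) * star U := by
      calc C * (U * Matrix.diagonal (fun i => ((β i ^ (1-r) : ℝ) : ℂ)) * star U)
          = (U * star U) * (C * (U * Matrix.diagonal (fun i => ((β i ^ (1-r) : ℝ) : ℂ)) * star U)) := by
            rw [hU2, Matrix.one_mul]
        _ = U * ((star U * C * U) * Matrix.diagonal (fun i => ((β i ^ (1-r) : ℝ) : ℂ))) * star U := by
            simp only [Matrix.mul_assoc]
    rw [h5, trace_conj hU1, Complex.ofReal_sum, Matrix.trace]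
    refine Finset.sum_congr rfl fun i _ => ?_
    rw [Matrix.diag_apply, Matrix.mul_diagonal, hdiagEntry i]
    push_cast
    ring
  have htrB : Matrix.trace B = ((∑ i, β i : ℝ) : ℂ) := by
    conv_lhs => rw [hBd]
    rw [trace_conj hU1, Matrix.trace_diagonal, Complex.ofReal_sum]
  rw [Matrix.trace_add, Matrix.trace_smul, htr1, htrB, Complex.add_re, Complex.smul_re,
    Complex.ofReal_re, Complex.ofReal_re, smul_eq_mul]
  calc r * ∑ k, lam k ^ (1/r)
      = r * ∑ k, (∑ i, w i k) * lam k ^ (1/r) := by simp only [hcol, one_mul]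
    _ = r * ∑ i, ∑ k, w i k * lam k ^ (1/r) := by
        simp only [Finset.sum_mul]; rw [Finset.sum_comm]
    _ ≤ r * ∑ i, c i ^ (1/r) := by
        refine mul_le_mul_of_nonneg_left ?_ hr0.le
        exact Finset.sum_le_sum fun i _ => jensen_rpow (w i) lam (hw0 i) (hrow i) hlam0 hr
    _ = ∑ i, r * c i ^ (1/r) := by rw [Finset.mul_sum]
    _ ≤ ∑ i, (c i * β i ^ (1-r) + (r-1) * β i) :=
        Finset.sum_le_sum fun i _ => amgm_scalar hr (hc0 i) (hβ0 i)
    _ = (∑ i, c i * β i ^ (1-r)) + (r-1) * ∑ i, β i := by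
        rw [Finset.sum_add_distrib, Finset.mul_sum]

private lemma upper_bound {r : ℝ} (hr : 1 ≤ r)
    {C : Matrix n n ℂ} (hC : C.PosSemidef) {ε : ℝ} (hε : 0 < ε) :
    ∃ B : {B : Matrix n n ℂ // B.PosDef},
      (Matrix.trace (C * mpow (B : Matrix n n ℂ) (1 - r) + (r - 1) • (B : Matrix n n ℂ))).re
        ≤ r * ∑ k, (hC.1.eigenvalues k + ε) ^ (1/r) := by
  have hr0 : (0:ℝ) < r := lt_of_lt_of_le one_pos hr
  have hV : (hC.1.eigenvectorUnitary : Matrix n n ℂ) ∈ Matrix.unitaryGroup n ℂ :=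
    hC.1.eigenvectorUnitary.2
  set V : Matrix n n ℂ := (hC.1.eigenvectorUnitary : Matrix n n ℂ) with hVdef
  set lam : n → ℝ := hC.1.eigenvalues with hlamdef
  have hlam0 : ∀ k, 0 ≤ lam k := hC.eigenvalues_nonneg
  have hV1 : star V * V = 1 := Matrix.mem_unitaryGroup_iff'.mp hV
  have hCd : C = V * Matrix.diagonal (fun k => ((lam k : ℝ) : ℂ)) * star V := spectral' hC.1
  set t : n → ℝ := fun k => (lam k + ε) ^ (1/r) with htdef
  have htpos : ∀ k, 0 < t k := fun k =>
    Real.rpow_pos_of_pos (by have := hlam0 k; linarith) _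
  set B : Matrix n n ℂ := V * Matrix.diagonal (fun k => ((t k : ℝ) : ℂ)) * star V with hBdef
  have hBpos : B.PosDef := posDef_conj hV htpos
  refine ⟨⟨B, hBpos⟩, ?_⟩
  have hmpowB : mpow B (1-r)
      = V * Matrix.diagonal (fun k => ((t k ^ (1-r) : ℝ) : ℂ)) * star V :=
    mpow_eq_conj hBpos.1 hV t hBdef (1-r)
  have htr1 : Matrix.trace (C * mpow B (1-r)) = ((∑ k, lam k * t k ^ (1-r) : ℝ) : ℂ) := by
    rw [hmpowB]
    conv_lhs => rw [hCd]
    rw [conj_mul_conj hV1, trace_conj hV1, Matrix.diagonal_mul_diagonal,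
      Matrix.trace_diagonal, Complex.ofReal_sum]
    push_cast
    rfl
  have htrB : Matrix.trace B = ((∑ k, t k : ℝ) : ℂ) := by
    rw [hBdef, trace_conj hV1, Matrix.trace_diagonal, Complex.ofReal_sum]
  show (Matrix.trace (C * mpow B (1-r) + (r-1) • B)).re ≤ r * ∑ k, (lam k + ε) ^ (1/r)
  rw [Matrix.trace_add, Matrix.trace_smul, htr1, htrB, Complex.add_re, Complex.smul_re,
    Complex.ofReal_re, Complex.ofReal_re, smul_eq_mul]
  have hterm : ∀ k, lam k * t k ^ (1-r) ≤ t k := by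
    intro k
    have hbase : (0:ℝ) < lam k + ε := by have := hlam0 k; linarith
    have h2 : lam k + ε = t k ^ r := by
      rw [htdef, ← Real.rpow_mul hbase.le, one_div, inv_mul_cancel₀ hr0.ne', Real.rpow_one]
    have h3 : (lam k + ε) * t k ^ (1-r) = t k := by
      rw [h2, ← Real.rpow_add (htpos k)]
      norm_num
    calc lam k * t k ^ (1-r) ≤ (lam k + ε) * t k ^ (1-r) :=
          mul_le_mul_of_nonneg_right (by linarith) (Real.rpow_nonneg (htpos k).le _)
      _ = t k := h3
  calc (∑ k, lam k * t k ^ (1-r)) + (r-1) * ∑ k, t k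
      ≤ (∑ k, t k) + (r-1) * ∑ k, t k :=
        add_le_add_left (Finset.sum_le_sum fun k _ => hterm k) _
    _ = r * ∑ k, t k := by ring
    _ = r * ∑ k, (lam k + ε) ^ (1/r) := rfl

end auxCL

/-- Carlen--Lieb variational formula: for `r ≥ 1` and `C ≥ 0`,
`Tr(C^{1/r}) = (1/r) · inf_{B > 0} Tr(C B^{1-r} + (r-1) B)`. -/
theorem stmt4 {m : Type*} [Fintype m] [DecidableEq m]
    (r : ℝ) (hr : 1 ≤ r) (C : Matrix m m ℂ) (hC : C.PosSemidef) :
    (Matrix.trace (mpow C (1/r))).re =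
      (1/r) * ⨅ B : {B : Matrix m m ℂ // B.PosDef},
        (Matrix.trace (C * mpow (B : Matrix m m ℂ) (1 - r) +
          (r - 1) • (B : Matrix m m ℂ))).re := by
  have hr0 : (0:ℝ) < r := lt_of_lt_of_le one_pos hr
  have hne : Nonempty {B : Matrix m m ℂ // B.PosDef} := ⟨⟨1, Matrix.PosDef.one⟩⟩
  set lam : m → ℝ := hC.1.eigenvalues with hlamdef
  set T : ℝ := ∑ k, lam k ^ (1/r) with hT
  set f : {B : Matrix m m ℂ // B.PosDef} → ℝ := fun B =>
    (Matrix.trace (C * mpow (B : Matrix m m ℂ) (1 - r) +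
      (r - 1) • (B : Matrix m m ℂ))).re with hf
  have hL : (Matrix.trace (mpow C (1/r))).re = T := trace_mpow_re hC.1 (1/r)
  have hlow : ∀ B : {B : Matrix m m ℂ // B.PosDef}, r * T ≤ f B :=
    fun B => lower_bound hr hC B.2
  have hbdd : BddBelow (Set.range f) := ⟨r * T, by rintro x ⟨B, rfl⟩; exact hlow B⟩
  have hup : (⨅ B, f B) ≤ r * T := by
    refine le_of_forall_pos_le_add fun δ hδ => ?_
    have hgcont : Continuous (fun ε : ℝ => r * ∑ k, (lam k + ε) ^ (1/r)) := by
      refine continuous_const.mul (continuous_finset_sum _ fun k _ => ?_)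
      exact (Real.continuous_rpow_const (by positivity)).comp (continuous_const.add continuous_id)
    have hg0 : r * ∑ k, (lam k + (0:ℝ)) ^ (1/r) = r * T := by
      simp [hT]
    have hev : ∀ᶠ ε in nhds (0:ℝ), (fun ε : ℝ => r * ∑ k, (lam k + ε) ^ (1/r)) ε < r * T + δ := by
      refine (hgcont.tendsto 0).eventually_lt_const ?_
      show r * ∑ k, (lam k + (0:ℝ)) ^ (1/r) < r * T + δ
      rw [hg0]; linarith
    rw [Metric.eventually_nhds_iff] at hev
    obtain ⟨η, hη, hball⟩ := hev
    have hεpos : (0:ℝ) < η/2 := by linarith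
    have hdist : dist (η/2) (0:ℝ) < η := by
      rw [Real.dist_eq, sub_zero, abs_of_pos hεpos]; linarith
    obtain ⟨B, hB⟩ := upper_bound hr hC hεpos
    have h1 : (⨅ B, f B) ≤ f B := ciInf_le hbdd B
    have h2 := hball hdist
    exact le_trans h1 (le_trans hB (le_of_lt h2))
  have hinf : (⨅ B, f B) = r * T := le_antisymm hup (le_ciInf hlow)
  rw [hL]
  show T = (1/r) * ⨅ B, f B
  rw [hinf]
  field_simp
end

section
/- Let p ≠ 0 and s > 0 be real numbers. If the function (a,b) ↦ (a^p + b^p)^s is concave on (0,∞)², then p ≤ 1 and ps ≤ 1. -/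
open Matrix
open scoped ComplexOrder

/-- Auxiliary: `x ↦ x^q` is strictly convex on `(0,∞)` when `q*(q-1) > 0`. -/
lemma aux_sc_rpow (q : ℝ) (hq : 0 < q * (q - 1)) :
    StrictConvexOn ℝ (Set.Ioi (0 : ℝ)) fun x : ℝ => x ^ q := by
  apply strictConvexOn_of_deriv2_pos (convex_Ioi 0)
  · exact fun x hx =>
      (Real.continuousAt_rpow_const x q (Or.inl (ne_of_gt hx))).continuousWithinAt
  · intro x hx
    rw [interior_Ioi] at hx
    have h1 : deriv (fun x : ℝ => x ^ q) =ᶠ[nhds x] fun y => q * y ^ (q - 1) := by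
      filter_upwards [isOpen_Ioi.eventually_mem hx] with y hy
      exact Real.deriv_rpow_const y q
    have h2 : deriv (deriv (fun x : ℝ => x ^ q)) x = q * ((q - 1) * x ^ (q - 1 - 1)) := by
      rw [h1.deriv_eq]
      exact ((Real.hasDerivAt_rpow_const (Or.inl (ne_of_gt hx))).const_mul q).deriv
    show 0 < deriv (deriv (fun x : ℝ => x ^ q)) x
    rw [h2, ← mul_assoc]
    exact mul_pos hq (Real.rpow_pos_of_pos hx _)

/-- Auxiliary: a function cannot be concave on `S` while agreeing on `S` with a positive
multiple of a strictly convex function, if `S` has two points. -/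
lemma aux_contra {S : Set ℝ} {g φ : ℝ → ℝ} {c : ℝ} (hc : 0 < c)
    (hconc : ConcaveOn ℝ S g) (hconv : StrictConvexOn ℝ S φ)
    (heq : ∀ x ∈ S, g x = c * φ x)
    {x y : ℝ} (hx : x ∈ S) (hy : y ∈ S) (hxy : x ≠ y) : False := by
  have h1 := hconc.2 hx hy (by norm_num : (0:ℝ) ≤ 1/2) (by norm_num : (0:ℝ) ≤ 1/2)
    (by norm_num)
  have h2 := hconv.2 hx hy hxy (by norm_num : (0:ℝ) < 1/2) (by norm_num : (0:ℝ) < 1/2)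
    (by norm_num)
  have hz : (1/2 : ℝ) • x + (1/2 : ℝ) • y ∈ S :=
    hconc.1 hx hy (by norm_num) (by norm_num) (by norm_num)
  have h3 := mul_lt_mul_of_pos_left h2 hc
  rw [heq _ hx, heq _ hy, heq _ hz] at h1
  simp only [smul_eq_mul] at h1 h3
  nlinarith

/-- If `p ≠ 0`, `s > 0` and `(a,b) ↦ (a^p + b^p)^s` is concave on `(0,∞)²`,
then `p ≤ 1` and `p·s ≤ 1`. -/
theorem stmt5 (p s : ℝ) (hp : p ≠ 0) (hs : 0 < s)
    (h : ConcaveOn ℝ (Set.Ioi 0 ×ˢ Set.Ioi 0)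
      (fun z : ℝ × ℝ => (z.1 ^ p + z.2 ^ p) ^ s)) :
    p ≤ 1 ∧ p * s ≤ 1 := by
  set q : ℝ := p * s with hqdef
  -- concavity along the diagonal
  have hdiag : ConcaveOn ℝ (Set.Ioi (0 : ℝ)) (fun x : ℝ => (x ^ p + x ^ p) ^ s) := by
    refine ⟨convex_Ioi 0, fun x hx y hy a b ha hb hab => ?_⟩
    have := h.2 (Set.mk_mem_prod hx hx) (Set.mk_mem_prod hy hy) ha hb hab
    simpa [Prod.smul_mk, Prod.mk_add_mk] using this
  -- the diagonal function equals 2^s * x^q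
  have heqdiag : ∀ x ∈ Set.Ioi (0 : ℝ), (x ^ p + x ^ p) ^ s = (2 : ℝ) ^ s * x ^ q := by
    intro x hx
    rw [← two_mul, Real.mul_rpow (by norm_num) (Real.rpow_nonneg (le_of_lt hx) p),
      ← Real.rpow_mul (le_of_lt hx)]
  -- q*(q-1) ≤ 0
  have hqq : ¬ 0 < q * (q - 1) := by
    intro hqq
    exact aux_contra (Real.rpow_pos_of_pos (by norm_num) s) hdiag (aux_sc_rpow q hqq)
      heqdiag (Set.mem_Ioi.mpr one_pos) (Set.mem_Ioi.mpr two_pos) (by norm_num)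
  push_neg at hqq
  have hqne : q ≠ 0 := mul_ne_zero hp (ne_of_gt hs)
  have hq0 : 0 < q := by
    rcases lt_or_gt_of_ne hqne with hneg | hpos
    · nlinarith
    · exact hpos
  have hq1 : q ≤ 1 := by nlinarith
  have hp0 : 0 < p := by nlinarith
  refine ⟨?_, hq1⟩
  -- now show p ≤ 1
  by_contra hp1
  push_neg at hp1
  set δ : ℝ := min 1 ((p - 1) ^ (1 / p)) with hδdef
  have hδ0 : 0 < δ :=
    lt_min one_pos (Real.rpow_pos_of_pos (by linarith) _)
  have hδp : δ ^ p ≤ p - 1 := by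
    have h1 : δ ^ p ≤ ((p - 1) ^ (1 / p)) ^ p :=
      Real.rpow_le_rpow (le_of_lt hδ0) (min_le_right _ _) (le_of_lt hp0)
    rwa [← Real.rpow_mul (by linarith : (0:ℝ) ≤ p - 1), one_div,
      inv_mul_cancel₀ hp, Real.rpow_one] at h1
  -- concavity along the line b = 1
  have hline : ConcaveOn ℝ (Set.Ioo (0 : ℝ) δ) (fun x : ℝ => (x ^ p + 1) ^ s) := by
    refine ⟨convex_Ioo 0 δ, fun x hx y hy a b ha hb hab => ?_⟩
    have := h.2 (Set.mk_mem_prod (Set.mem_Ioi.mpr hx.1) (Set.mem_Ioi.mpr one_pos))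
      (Set.mk_mem_prod (Set.mem_Ioi.mpr hy.1) (Set.mem_Ioi.mpr one_pos)) ha hb hab
    simpa [Prod.smul_mk, Prod.mk_add_mk, smul_eq_mul, mul_one, hab, Real.one_rpow]
      using this
  -- strict convexity of the same function on Ioo 0 δ
  have hsc : StrictConvexOn ℝ (Set.Ioo (0 : ℝ) δ) (fun x : ℝ => (x ^ p + 1) ^ s) := by
    apply strictConvexOn_of_deriv2_pos (convex_Ioo 0 δ)
    · apply ContinuousOn.rpow_const
      · exact (continuousOn_id.rpow_const fun x hx => Or.inl (ne_of_gt hx.1)).add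
          continuousOn_const
      · intro x hx
        have hXp : 0 < x ^ p + 1 := by
          have := Real.rpow_pos_of_pos hx.1 p; linarith
        exact Or.inl (ne_of_gt hXp)
    · intro x hx
      rw [interior_Ioo] at hx
      obtain ⟨hx0, hxδ⟩ := hx
      have hX : 0 < x ^ p := Real.rpow_pos_of_pos hx0 p
      have hA : 0 < x ^ p + 1 := by linarith
      -- first derivative of y ↦ (y^p + 1)^s
      have hd_inner : ∀ y ∈ Set.Ioo (0:ℝ) δ,
          HasDerivAt (fun y : ℝ => y ^ p + 1) (p * y ^ (p - 1)) y := fun y hy =>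
        (Real.hasDerivAt_rpow_const (Or.inl (ne_of_gt hy.1))).add_const 1
      have hderivg : ∀ y ∈ Set.Ioo (0:ℝ) δ,
          deriv (fun y : ℝ => (y ^ p + 1) ^ s) y
            = s * p * ((y ^ p + 1) ^ (s - 1) * y ^ (p - 1)) := by
        intro y hy
        have hAy : 0 < y ^ p + 1 := by
          have := Real.rpow_pos_of_pos hy.1 p; linarith
        have hcomp : HasDerivAt (fun y : ℝ => (y ^ p + 1) ^ s)
            (s * (y ^ p + 1) ^ (s - 1) * (p * y ^ (p - 1))) y :=
          (Real.hasDerivAt_rpow_const (p := s) (Or.inl (ne_of_gt hAy))).comp (h := fun y : ℝ => y ^ p + 1) y (hd_inner y hy)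
        rw [hcomp.deriv]; ring
      have hev : deriv (fun y : ℝ => (y ^ p + 1) ^ s)
          =ᶠ[nhds x] fun y => s * p * ((y ^ p + 1) ^ (s - 1) * y ^ (p - 1)) := by
        filter_upwards [isOpen_Ioo.eventually_mem ⟨hx0, hxδ⟩] with y hy
        exact hderivg y hy
      have hu : HasDerivAt (fun y : ℝ => (y ^ p + 1) ^ (s - 1))
          ((s - 1) * (x ^ p + 1) ^ (s - 1 - 1) * (p * x ^ (p - 1))) x :=
        (Real.hasDerivAt_rpow_const (p := s - 1) (Or.inl (ne_of_gt hA))).comp (h := fun y : ℝ => y ^ p + 1) x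
          (hd_inner x ⟨hx0, hxδ⟩)
      have hv : HasDerivAt (fun y : ℝ => y ^ (p - 1)) ((p - 1) * x ^ (p - 1 - 1)) x :=
        Real.hasDerivAt_rpow_const (Or.inl (ne_of_gt hx0))
      have hG : HasDerivAt (fun y => s * p * ((y ^ p + 1) ^ (s - 1) * y ^ (p - 1)))
          (s * p * ((s - 1) * (x ^ p + 1) ^ (s - 1 - 1) * (p * x ^ (p - 1)) * x ^ (p - 1)
            + (x ^ p + 1) ^ (s - 1) * ((p - 1) * x ^ (p - 1 - 1)))) x :=
        (hu.mul hv).const_mul (s * p)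
      have h2 : deriv (deriv (fun y : ℝ => (y ^ p + 1) ^ s)) x
          = s * p * ((s - 1) * (x ^ p + 1) ^ (s - 1 - 1) * (p * x ^ (p - 1)) * x ^ (p - 1)
            + (x ^ p + 1) ^ (s - 1) * ((p - 1) * x ^ (p - 1 - 1))) := by
        rw [hev.deriv_eq]; exact hG.deriv
      show 0 < deriv (deriv (fun y : ℝ => (y ^ p + 1) ^ s)) x
      rw [h2]
      -- rewrite the rpow expressions
      have e1 : x ^ (p - 1) = x ^ p / x := by
        rw [Real.rpow_sub hx0, Real.rpow_one]
      have e2 : x ^ (p - 1 - 1) = x ^ p / x / x := by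
        rw [Real.rpow_sub hx0, Real.rpow_sub hx0, Real.rpow_one]
      have e3 : (x ^ p + 1) ^ (s - 1) = (x ^ p + 1) ^ (s - 1 - 1) * (x ^ p + 1) := by
        rw [← Real.rpow_add_one (ne_of_gt hA)]; ring_nf
      -- the bracket is positive
      have hXδ : x ^ p < δ ^ p := Real.rpow_lt_rpow (le_of_lt hx0) hxδ hp0
      have hB : 0 < (p * s - 1) * x ^ p + (p - 1) := by
        have h4 : (p * s - 1) * x ^ p ≥ (-1) * x ^ p := by
          apply mul_le_mul_of_nonneg_right _ (le_of_lt hX)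
          simp only [hqdef] at hq0; linarith
        nlinarith
      have hApow : 0 < (x ^ p + 1) ^ (s - 1 - 1) := Real.rpow_pos_of_pos hA _
      have key : s * p * ((s - 1) * (x ^ p + 1) ^ (s - 1 - 1) * (p * x ^ (p - 1)) * x ^ (p - 1)
            + (x ^ p + 1) ^ (s - 1) * ((p - 1) * x ^ (p - 1 - 1)))
          = s * p * (x ^ p + 1) ^ (s - 1 - 1) * (x ^ p / (x * x))
            * ((p * s - 1) * x ^ p + (p - 1)) := by
        rw [e3, e1, e2]; field_simp; ring
      rw [key]
      have := mul_pos (mul_pos (mul_pos (mul_pos hs hp0) hApow)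
        (div_pos hX (mul_pos hx0 hx0))) hB
      linarith
  -- derive the contradiction
  have heqline : ∀ x ∈ Set.Ioo (0:ℝ) δ, (x ^ p + 1) ^ s = 1 * (x ^ p + 1) ^ s := by
    intro x _; rw [one_mul]
  exact aux_contra one_pos hline hsc heqline
    (show δ/3 ∈ Set.Ioo (0:ℝ) δ by constructor <;> [positivity; linarith])
    (show δ/2 ∈ Set.Ioo (0:ℝ) δ by constructor <;> [positivity; linarith])
    (by intro hd; rw [div_eq_div_iff (by norm_num) (by norm_num)] at hd; linarith)
end

section
/- Let p ≠ 0 and s > 0 be real numbers. If the function (a,b) ↦ (a^p + b^p)^s is convex on (0,∞)², then either (ps ≥ 1 and p ≥ 1) or (p ≤ 1 and (a ↦ a^{ps} is convex, which forces ps ≥ 1 or ps ≤ 0)); in particular, when s > 0 and convexity holds, one has p ∈ (-∞, 0) ∪ [1, ∞). -/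
open Matrix
open scoped ComplexOrder

open Filter

lemma tendsto_G (s : ℝ) (hs : 0 < s) (u : ℝ) (hu : 0 ≤ u) :
    Tendsto (fun c : ℝ => ((u + c) ^ s - c ^ s) * (c / (s * c ^ s)))
      atTop (nhds u) := by
  have hderiv : HasDerivAt (fun t : ℝ => (1 + u * t) ^ s) (s * u) 0 := by
    have h1 : HasDerivAt (fun t : ℝ => 1 + u * t) u 0 := by
      simpa using ((hasDerivAt_id (0:ℝ)).const_mul u).const_add 1
    have h2 : HasDerivAt (fun x : ℝ => x ^ s) (s * (1 + u * 0) ^ (s - 1)) (1 + u * 0) :=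
      Real.hasDerivAt_rpow_const (Or.inl (by norm_num))
    have := h2.comp 0 h1
    simp at this; exact this
  rw [hasDerivAt_iff_tendsto_slope] at hderiv
  have hinv : Tendsto (fun c : ℝ => 1 / c) atTop (nhdsWithin 0 {(0:ℝ)}ᶜ) := by
    refine tendsto_nhdsWithin_of_tendsto_nhds_of_eventually_within _
      (by simpa using tendsto_inv_atTop_zero) ?_
    filter_upwards [eventually_gt_atTop (0:ℝ)] with c hc
    simp only [Set.mem_compl_iff, Set.mem_singleton_iff]
    positivity
  have hcomp : Tendsto (fun c : ℝ => slope (fun t : ℝ => (1 + u * t) ^ s) 0 (1/c))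
      atTop (nhds (s * u)) := hderiv.comp hinv
  have hfinal : Tendsto (fun c : ℝ => slope (fun t : ℝ => (1 + u * t) ^ s) 0 (1/c) / s)
      atTop (nhds u) := by
    have h10 := hcomp.div_const s
    rwa [mul_div_cancel_left₀ _ hs.ne'] at h10
  refine hfinal.congr' ?_
  filter_upwards [eventually_gt_atTop (0:ℝ)] with c hc
  have hcs : (0:ℝ) < c ^ s := Real.rpow_pos_of_pos hc s
  have key : u + c = c * (1 + u * (1/c)) := by field_simp; ring
  have hml : (u + c) ^ s = c ^ s * (1 + u * (1/c)) ^ s := by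
    rw [key, Real.mul_rpow hc.le (by positivity)]
  rw [slope_def_field, hml]
  simp only [mul_zero, add_zero, Real.one_rpow]
  field_simp
  ring

lemma aux_mid (s : ℝ) (hs : 0 < s) (a b d : ℝ) (ha : 0 ≤ a) (hb : 0 ≤ b) (hd : 0 ≤ d)
    (H : ∀ c : ℝ, 0 < c → (a + c) ^ s ≤ ((b + c) ^ s + (d + c) ^ s) / 2) :
    a ≤ (b + d) / 2 := by
  have hA := tendsto_G s hs a ha
  have hB := tendsto_G s hs b hb
  have hD := tendsto_G s hs d hd
  have hR : Tendsto (fun c : ℝ =>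
      (((b + c) ^ s - c ^ s) * (c / (s * c ^ s)) + ((d + c) ^ s - c ^ s) * (c / (s * c ^ s))) / 2)
      atTop (nhds ((b + d) / 2)) := (hB.add hD).div_const 2
  refine le_of_tendsto_of_tendsto hA hR ?_
  filter_upwards [eventually_gt_atTop (0:ℝ)] with c hc
  have h1 := H c hc
  have hK : 0 < c / (s * c ^ s) := by
    have := Real.rpow_pos_of_pos hc s
    positivity
  have := mul_le_mul_of_nonneg_right h1 hK.le

  nlinarith [this]

lemma not_conc (q : ℝ) (hq : 0 < q)
    (hmid : ∀ x y : ℝ, 0 < x → 0 < y → ((x + y) / 2) ^ q ≤ (x ^ q + y ^ q) / 2) :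
    1 ≤ q := by
  by_contra hlt
  push_neg at hlt
  have hc := (Real.strictConcaveOn_rpow hq hlt).2
    (Set.mem_Ici.2 (by norm_num : (0:ℝ) ≤ 1)) (Set.mem_Ici.2 (by norm_num : (0:ℝ) ≤ 4))
    (by norm_num : (1:ℝ) ≠ 4) (by norm_num : (0:ℝ) < 1/2) (by norm_num : (0:ℝ) < 1/2)
    (by norm_num)
  have hm := hmid 1 4 one_pos (by norm_num)
  norm_num [smul_eq_mul, Real.one_rpow] at hc hm
  linarith

/-- If `p ≠ 0`, `s > 0` and `(a,b) ↦ (a^p + b^p)^s` is convex on `(0,∞)²`,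
then either `p ≥ 1` and `p·s ≥ 1`, or `p < 0`. -/
theorem stmt6 (p s : ℝ) (hp : p ≠ 0) (hs : 0 < s)
    (h : ConvexOn ℝ (Set.Ioi 0 ×ˢ Set.Ioi 0)
      (fun z : ℝ × ℝ => (z.1 ^ p + z.2 ^ p) ^ s)) :
    (1 ≤ p ∧ 1 ≤ p * s) ∨ p < 0 := by
  rcases lt_or_gt_of_ne hp with hneg | hpos
  · exact Or.inr hneg
  left
  -- midpoint inequality for exponent p * s (along the diagonal)
  have mid1 : ∀ x y : ℝ, 0 < x → 0 < y →
      ((x + y) / 2) ^ (p * s) ≤ (x ^ (p * s) + y ^ (p * s)) / 2 := by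
    intro x y hx hy
    have hmem1 : ((x, x) : ℝ × ℝ) ∈ Set.Ioi 0 ×ˢ Set.Ioi 0 := Set.mk_mem_prod hx hx
    have hmem2 : ((y, y) : ℝ × ℝ) ∈ Set.Ioi 0 ×ˢ Set.Ioi 0 := Set.mk_mem_prod hy hy
    have hc := h.2 hmem1 hmem2 (by norm_num : (0:ℝ) ≤ 1/2) (by norm_num : (0:ℝ) ≤ 1/2)
      (by norm_num)
    simp only [Prod.smul_mk, Prod.mk_add_mk, smul_eq_mul] at hc
    have key : ∀ t : ℝ, 0 < t → (t ^ p + t ^ p) ^ s = 2 ^ s * t ^ (p * s) := by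
      intro t ht
      rw [← two_mul, Real.mul_rpow (by norm_num) (Real.rpow_nonneg ht.le p),
        ← Real.rpow_mul ht.le]
    have hm : (0:ℝ) < (x + y) / 2 := by linarith
    have e1 := key _ hm
    have e2 := key _ hx
    have e3 := key _ hy
    have hx2 : (1:ℝ)/2 * x + 1/2 * y = (x + y) / 2 := by ring
    rw [hx2] at hc
    rw [e1, e2, e3] at hc
    have h2s : (0:ℝ) < 2 ^ s := Real.rpow_pos_of_pos (by norm_num) s
    nlinarith [hc, h2s]
  -- midpoint inequality for exponent p (slices with second coordinate fixed)
  have mid2 : ∀ x y : ℝ, 0 < x → 0 < y →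
      ((x + y) / 2) ^ p ≤ (x ^ p + y ^ p) / 2 := by
    intro x y hx hy
    have hm : (0:ℝ) < (x + y) / 2 := by linarith
    refine aux_mid s hs _ _ _ (Real.rpow_nonneg hm.le p) (Real.rpow_nonneg hx.le p)
      (Real.rpow_nonneg hy.le p) ?_
    intro c hc
    set C : ℝ := c ^ p⁻¹ with hC
    have hCpos : 0 < C := Real.rpow_pos_of_pos hc _
    have hCp : C ^ p = c := Real.rpow_inv_rpow hc.le hp
    have hmem1 : ((x, C) : ℝ × ℝ) ∈ Set.Ioi 0 ×ˢ Set.Ioi 0 := Set.mk_mem_prod hx hCpos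
    have hmem2 : ((y, C) : ℝ × ℝ) ∈ Set.Ioi 0 ×ˢ Set.Ioi 0 := Set.mk_mem_prod hy hCpos
    have hcv := h.2 hmem1 hmem2 (by norm_num : (0:ℝ) ≤ 1/2) (by norm_num : (0:ℝ) ≤ 1/2)
      (by norm_num)
    simp only [Prod.smul_mk, Prod.mk_add_mk, smul_eq_mul] at hcv
    have hx2 : (1:ℝ)/2 * x + 1/2 * y = (x + y) / 2 := by ring
    have hC2 : (1:ℝ)/2 * C + 1/2 * C = C := by ring
    rw [hx2, hC2, hCp] at hcv
    linarith
  exact ⟨not_conc p hpos mid2, not_conc (p * s) (mul_pos hpos hs) mid1⟩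
end

section
/- Let p, q, s be nonzero real numbers with s > 0. If the function (x,y) ↦ x^{ps} y^{qs} is jointly convex on (0,∞)², then pq·(1 − (p+q)s) ≥ 0. -/
open Matrix
open scoped ComplexOrder

section
open Set

private lemma lin_deriv (c : ℝ) (t : ℝ) : HasDerivAt (fun t : ℝ => 1 + t * c) c t := by
  simpa using ((hasDerivAt_id t).mul_const c).const_add 1

private lemma rpow_fact_deriv {c e t : ℝ} (h : 0 < 1 + t * c) :
    HasDerivAt (fun t : ℝ => (1 + t * c) ^ e) (e * (1 + t * c) ^ (e - 1) * c) t := by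
  have := (Real.hasDerivAt_rpow_const (p := e) (Or.inl h.ne')).comp t (lin_deriv c t)
  exact this

private lemma quadform_nonneg (a b : ℝ)
    (h : ConvexOn ℝ (Set.Ioi 0 ×ˢ Set.Ioi 0)
      (fun z : ℝ × ℝ => z.1 ^ a * z.2 ^ b)) (u1 u2 : ℝ) :
    0 ≤ a * (a - 1) * u1 ^ 2 + 2 * a * b * u1 * u2 + b * (b - 1) * u2 ^ 2 := by
  set ε : ℝ := (1 + |u1| + |u2|)⁻¹ with hε
  have hM : (0:ℝ) < 1 + |u1| + |u2| := by positivity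
  have hε0 : 0 < ε := inv_pos.mpr hM
  have hpos : ∀ t ∈ Ioo (-ε) ε, 0 < 1 + t * u1 ∧ 0 < 1 + t * u2 := by
    intro t ht
    have h1 : |t| < ε := abs_lt.mpr ⟨ht.1, ht.2⟩
    constructor
    · have : |t * u1| < 1 := by
        calc |t * u1| = |t| * |u1| := abs_mul _ _
        _ < ε * (1 + |u1| + |u2|) := by
            rcases eq_or_lt_of_le (abs_nonneg u1) with h' | h'
            · simpa [← h'] using mul_pos hε0 hM
            · exact mul_lt_mul' h1.le (by linarith [abs_nonneg u2]) (abs_nonneg u1) hε0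
        _ = 1 := inv_mul_cancel₀ hM.ne'
      linarith [neg_abs_le (t * u1)]
    · have : |t * u2| < 1 := by
        calc |t * u2| = |t| * |u2| := abs_mul _ _
        _ < ε * (1 + |u1| + |u2|) := by
            rcases eq_or_lt_of_le (abs_nonneg u2) with h' | h'
            · simpa [← h'] using mul_pos hε0 hM
            · exact mul_lt_mul' h1.le (by linarith [abs_nonneg u1]) (abs_nonneg u2) hε0
        _ = 1 := inv_mul_cancel₀ hM.ne'
      linarith [neg_abs_le (t * u2)]
  set φ : ℝ → ℝ := fun t => (1 + t * u1) ^ a * (1 + t * u2) ^ b with hφ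
  set φ' : ℝ → ℝ := fun t =>
      u1 * a * ((1 + t * u1) ^ (a - 1) * (1 + t * u2) ^ b)
        + u2 * b * ((1 + t * u1) ^ a * (1 + t * u2) ^ (b - 1)) with hφ'
  have hderiv : ∀ t ∈ Ioo (-ε) ε, HasDerivAt φ (φ' t) t := by
    intro t ht
    obtain ⟨h1, h2⟩ := hpos t ht
    have := (rpow_fact_deriv (e := a) h1).mul (rpow_fact_deriv (e := b) h2)
    convert this using 1
    any_goals rfl
    simp only [hφ', φ']
    ring
  -- convexity of φ on the interval
  have hconv : ConvexOn ℝ (Ioo (-ε) ε) φ := by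
    refine ⟨convex_Ioo _ _, fun x hx y hy α β hα hβ hab => ?_⟩
    have hX : ((1 + x * u1, 1 + x * u2) : ℝ × ℝ) ∈ Set.Ioi (0:ℝ) ×ˢ Set.Ioi (0:ℝ) :=
      ⟨(hpos x hx).1, (hpos x hx).2⟩
    have hY : ((1 + y * u1, 1 + y * u2) : ℝ × ℝ) ∈ Set.Ioi (0:ℝ) ×ˢ Set.Ioi (0:ℝ) :=
      ⟨(hpos y hy).1, (hpos y hy).2⟩
    have := h.2 hX hY hα hβ hab
    simp only [Prod.smul_mk, Prod.mk_add_mk, smul_eq_mul] at this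
    have e1 : 1 + (α * x + β * y) * u1 = α * (1 + x * u1) + β * (1 + y * u1) := by
      linear_combination -hab
    have e2 : 1 + (α * x + β * y) * u2 = α * (1 + x * u2) + β * (1 + y * u2) := by
      linear_combination -hab
    simpa only [hφ, smul_eq_mul, e1, e2] using this
  have hmem0 : (0:ℝ) ∈ Ioo (-ε) ε := ⟨neg_lt_zero.mpr hε0, hε0⟩
  have Gmono : MonotoneOn (deriv φ) (Ioo (-ε) ε) :=
    hconv.monotoneOn_deriv fun t ht => (hderiv t ht).differentiableAt
  -- derivative of φ' at 0
  set c : ℝ := u1 * a * ((a - 1) * u1 + b * u2) + u2 * b * (a * u1 + (b - 1) * u2) with hc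
  have hφ'0 : HasDerivAt φ' c 0 := by
    have r1 : HasDerivAt (fun t : ℝ => (1 + t * u1) ^ (a - 1) * (1 + t * u2) ^ b)
        ((a - 1) * u1 + b * u2) 0 := by
      have := (rpow_fact_deriv (e := a - 1) (t := 0) (c := u1) (by norm_num)).mul
        (rpow_fact_deriv (e := b) (t := 0) (c := u2) (by norm_num))
      convert (this : HasDerivAt (fun t : ℝ => (1 + t * u1) ^ (a - 1) * (1 + t * u2) ^ b) _ 0) using 1
      any_goals rfl
      simp [Real.one_rpow]
    have r2 : HasDerivAt (fun t : ℝ => (1 + t * u1) ^ a * (1 + t * u2) ^ (b - 1))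
        (a * u1 + (b - 1) * u2) 0 := by
      have := (rpow_fact_deriv (e := a) (t := 0) (c := u1) (by norm_num)).mul
        (rpow_fact_deriv (e := b - 1) (t := 0) (c := u2) (by norm_num))
      convert (this : HasDerivAt (fun t : ℝ => (1 + t * u1) ^ a * (1 + t * u2) ^ (b - 1)) _ 0) using 1
      any_goals rfl
      simp [Real.one_rpow]
    exact (r1.const_mul (u1 * a)).add (r2.const_mul (u2 * b))
  -- deriv φ agrees with φ' near 0
  have hIoo_nhds : Ioo (-ε) ε ∈ nhds (0:ℝ) := Ioo_mem_nhds hmem0.1 hmem0.2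
  have heq : (fun t => deriv φ t) =ᶠ[nhds (0:ℝ)] φ' := by
    filter_upwards [hIoo_nhds] with t ht
    exact (hderiv t ht).deriv
  have hG : HasDerivAt (deriv φ) c 0 := hφ'0.congr_of_eventuallyEq heq
  -- nonneg of c from monotonicity
  have hslope : ∀ᶠ t in nhdsWithin (0:ℝ) {(0:ℝ)}ᶜ, 0 ≤ slope (deriv φ) 0 t := by
    filter_upwards [mem_nhdsWithin_of_mem_nhds hIoo_nhds, self_mem_nhdsWithin] with t ht ht0
    rw [slope_def_field]
    have ht0' : t ≠ 0 := ht0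
    rcases ht0'.lt_or_gt with htn | htp
    · rw [div_nonneg_iff]
      exact Or.inr ⟨sub_nonpos.mpr (Gmono ht hmem0 htn.le), by simpa using htn.le⟩
    · apply div_nonneg
      · simpa using sub_nonneg.mpr (Gmono hmem0 ht htp.le)
      · simpa using htp.le
  have hc0 : 0 ≤ c :=
    ge_of_tendsto (hasDerivAt_iff_tendsto_slope.mp hG) hslope
  nlinarith [hc0]

end

open Set in
/-- If `p, q, s` are nonzero with `s > 0` and `(x,y) ↦ x^{ps} y^{qs}` is jointly convex
on `(0,∞)²`, then `p·q·(1 - (p+q)s) ≥ 0`. -/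
theorem stmt7 (p q s : ℝ) (hp : p ≠ 0) (hq : q ≠ 0) (hs : 0 < s)
    (h : ConvexOn ℝ (Set.Ioi 0 ×ˢ Set.Ioi 0)
      (fun z : ℝ × ℝ => z.1 ^ (p * s) * z.2 ^ (q * s))) :
    0 ≤ p * q * (1 - (p + q) * s) := by
  set a := p * s
  set b := q * s
  have key : ∀ x : ℝ, 0 ≤ (a * (a - 1)) * (x * x) + (2 * a * b) * x + (b * (b - 1)) := by
    intro x
    have := quadform_nonneg a b h x 1
    nlinarith [this]
  have hd := discrim_le_zero key
  rw [discrim] at hd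
  have hd' : (2 * (p*s) * (q*s)) ^ 2 - 4 * ((p*s) * ((p*s) - 1)) * ((q*s) * ((q*s) - 1)) ≤ 0 := hd
  have h2 : 0 ≤ p * q * (1 - (p + q) * s) * (s * s) := by nlinarith [hd']
  have hs2 : (0:ℝ) < s * s := mul_pos hs hs
  exact (mul_nonneg_iff_of_pos_right hs2).mp h2
end
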